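/- arXiv:1812.06894 — 5 statements merged into one kernel-verified Lean document; each statement's English description precedes it below -/
import Mathlib

section
/- Under the asymptotic regime in which n → ∞ with n > p + m, p ≥ r ≥ 1, m·r → ∞ and max{p, m, r}/n → 0, there exist a constant C > 0 and an index N such that for all n ≥ N, |μₙ − [−n·m·r/(n+r−p) − n·m·r·(m+r)/(2(n+r−p)²) − n·m·r·(m²/3 + m·r/2 + r²/3)/(n+r−p)³]| ≤ C·[m·r·(m³ + r³)/n³ + m·r/n]. -/
open Filter

/-- `μₙ` of the paper. -/
noncomputable def muN (p m r : ℕ → ℕ) (n : ℕ) : ℝ :=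
  (n : ℝ) * ((n : ℝ) - m n - p n - 1 / 2) *
      Real.log ((((n : ℝ) + r n - p n - m n) * ((n : ℝ) - p n)) /
        ((((n : ℝ) - p n - m n)) * ((n : ℝ) + r n - p n)))
    + (n : ℝ) * r n * Real.log (((n : ℝ) + r n - p n - m n) / ((n : ℝ) + r n - p n))
    + (n : ℝ) * m n * Real.log (((n : ℝ) - p n) / ((n : ℝ) + r n - p n))

lemma log_taylor3 {u : ℝ} (h0 : 0 ≤ u) (h1 : u ≤ 1/4) :
    |u + u^2/2 + u^3/3 + Real.log (1 - u)| ≤ 2*u^4 := by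
  have habs : |u| < 1 := by rw [abs_of_nonneg h0]; linarith
  have H := Real.abs_log_sub_add_sum_range_le habs 3
  rw [abs_of_nonneg h0] at H
  have hsum : (∑ i ∈ Finset.range 3, u ^ (i + 1) / ((i:ℝ) + 1)) = u + u^2/2 + u^3/3 := by
    simp [Finset.sum_range_succ]
    norm_num
  rw [hsum] at H
  have h2 : u^4/(1-u) ≤ 2*u^4 := by
    rw [div_le_iff₀ (by linarith)]
    nlinarith [pow_nonneg h0 4]
  linarith

noncomputable def Rfun (m x : ℝ) : ℝ :=
  Real.log x - Real.log (x - m) - m * x⁻¹ - m^2/2 * (x^2)⁻¹ - m^3/3 * (x^3)⁻¹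

noncomputable def Hfun (m x : ℝ) : ℝ :=
  x * Real.log x - (x - m) * Real.log (x - m) - m * Real.log x
    + m^2/2 * x⁻¹ + m^3/6 * (x^2)⁻¹

lemma Hfun_deriv {m x : ℝ} (hm : 0 < m) (hx : m < x) :
    HasDerivAt (Hfun m) (Rfun m x) x := by
  have hx0 : (0:ℝ) < x := lt_trans hm hx
  have hx0' : x ≠ 0 := ne_of_gt hx0
  have hxm : x - m ≠ 0 := ne_of_gt (by linarith)
  have d1 : HasDerivAt (fun y : ℝ => y * Real.log y) (Real.log x + 1) x :=
    Real.hasDerivAt_mul_log hx0'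
  have d2 : HasDerivAt (fun y : ℝ => (y - m) * Real.log (y - m)) (Real.log (x - m) + 1) x := by
    have := (Real.hasDerivAt_mul_log hxm).comp x ((hasDerivAt_id x).sub_const m)
    simp only [mul_one] at this
    exact this
  have d3 : HasDerivAt (fun y : ℝ => m * Real.log y) (m * x⁻¹) x :=
    (Real.hasDerivAt_log hx0').const_mul m
  have d4 : HasDerivAt (fun y : ℝ => m^2/2 * y⁻¹) (m^2/2 * (-(x^2)⁻¹)) x :=
    (hasDerivAt_inv hx0').const_mul (m^2/2)
  have d5 : HasDerivAt (fun y : ℝ => m^3/6 * (y^2)⁻¹)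
      (m^3/6 * (-((2:ℕ) * x ^ 1) / (x^2)^2)) x := by
    exact (((hasDerivAt_pow 2 x).inv (pow_ne_zero 2 hx0'))).const_mul (m^3/6)
  have := (((d1.sub d2).sub d3).add d4).add d5
  refine this.congr_deriv ?_
  unfold Rfun
  field_simp
  ring

lemma Rfun_cont {m q s : ℝ} (hm : 0 < m) (hq : m < q) (hqs : q ≤ s) :
    ContinuousOn (Rfun m) (Set.uIcc q s) := by
  rw [Set.uIcc_of_le hqs]
  have h1 : ∀ x ∈ Set.Icc q s, x ≠ 0 := fun x hx => ne_of_gt (by have := hx.1; linarith)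
  have h2 : ∀ x ∈ Set.Icc q s, x - m ≠ 0 := fun x hx => ne_of_gt (by have := hx.1; linarith)
  unfold Rfun
  apply ContinuousOn.sub
  apply ContinuousOn.sub
  apply ContinuousOn.sub
  apply ContinuousOn.sub
  · exact ContinuousOn.log continuousOn_id h1
  · exact ContinuousOn.log (continuousOn_id.sub continuousOn_const) h2
  · exact continuousOn_const.mul (ContinuousOn.inv₀ continuousOn_id h1)
  · exact continuousOn_const.mul (ContinuousOn.inv₀ (continuousOn_id.pow 2)
      (fun x hx => pow_ne_zero 2 (h1 x hx)))
  · exact continuousOn_const.mul (ContinuousOn.inv₀ (continuousOn_id.pow 3)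
      (fun x hx => pow_ne_zero 3 (h1 x hx)))

lemma Rfun_bound {m q s x : ℝ} (hm : 0 < m) (hmq : 4*m ≤ q) (hx : x ∈ Set.uIoc q s) (hqs : q ≤ s) :
    ‖Rfun m x‖ ≤ 2*m^4/q^4 := by
  rw [Set.uIoc_of_le hqs] at hx
  obtain ⟨hx1, hx2⟩ := hx
  have hq0 : (0:ℝ) < q := by linarith
  have hx0 : (0:ℝ) < x := lt_trans hq0 hx1
  have hxm : (0:ℝ) < x - m := by linarith
  have hu0 : 0 ≤ m/x := le_of_lt (div_pos hm hx0)
  have hu1 : m/x ≤ 1/4 := by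
    rw [div_le_div_iff₀ hx0 (by norm_num)]; linarith
  have H := log_taylor3 hu0 hu1
  have e1 : (1:ℝ) - m/x = (x - m)/x := by field_simp
  rw [e1, Real.log_div (ne_of_gt hxm) (ne_of_gt hx0)] at H
  have e2 : Rfun m x = -(m/x + (m/x)^2/2 + (m/x)^3/3 + (Real.log (x-m) - Real.log x)) := by
    unfold Rfun; field_simp; ring
  rw [Real.norm_eq_abs, e2, abs_neg]
  refine le_trans H ?_
  have : (m/x)^4 ≤ m^4/q^4 := by
    rw [div_pow, div_le_div_iff₀ (by positivity) (by positivity)]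
    have h4 : q^4 ≤ x^4 := pow_le_pow_left₀ hq0.le hx1.le 4
    nlinarith [pow_pos hm 4]
  have e3 : 2*m^4/q^4 = 2*(m^4/q^4) := by ring
  linarith

lemma E2_bound {q r : ℝ} (hr1 : 1 ≤ r) (hrq : 4*r ≤ q) :
    |Real.log (q+r) - Real.log q - (r/(q+r) + r^2/(2*(q+r)^2) + r^3/(3*(q+r)^3))|
      ≤ 2*r^4/q^4 := by
  have hr0 : (0:ℝ) < r := by linarith
  have hq0 : (0:ℝ) < q := by linarith
  have hs0 : (0:ℝ) < q + r := by linarith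
  have hu0 : 0 ≤ r/(q+r) := by positivity
  have hu1 : r/(q+r) ≤ 1/4 := by
    rw [div_le_div_iff₀ hs0 (by norm_num)]; linarith
  have H := log_taylor3 hu0 hu1
  have e1 : (1:ℝ) - r/(q+r) = q/(q+r) := by field_simp; ring
  rw [e1, Real.log_div hq0.ne' hs0.ne'] at H
  have e2 : Real.log (q+r) - Real.log q - (r/(q+r) + r^2/(2*(q+r)^2) + r^3/(3*(q+r)^3))
      = -(r/(q+r) + (r/(q+r))^2/2 + (r/(q+r))^3/3
        + (Real.log q - Real.log (q+r))) := by
    field_simp; ring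
  rw [e2, abs_neg]
  refine le_trans H ?_
  have h4 : (r/(q+r))^4 ≤ r^4/q^4 := by
    rw [div_pow, div_le_div_iff₀ (by positivity) (by positivity)]
    have h5 : q^4 ≤ (q+r)^4 := pow_le_pow_left₀ hq0.le (by linarith) 4
    nlinarith [pow_pos hr0 4]
  have e3 : 2*r^4/q^4 = 2*(r^4/q^4) := by ring
  linarith

lemma Lam_bound {q m r : ℝ} (hm1 : 1 ≤ m) (hr1 : 1 ≤ r) (hmq : 4*m ≤ q) (hrq : 4*r ≤ q) :
    0 ≤ Real.log (((q + r - m) * q) / ((q - m) * (q + r)))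
    ∧ Real.log (((q + r - m) * q) / ((q - m) * (q + r))) ≤ 2*m*r/q^2 := by
  have hm0 : (0:ℝ) < m := by linarith
  have hr0 : (0:ℝ) < r := by linarith
  have hq0 : (0:ℝ) < q := by linarith
  have htm : (0:ℝ) < q - m := by linarith
  have hs0 : (0:ℝ) < q + r := by linarith
  have hΛarg : ((q + r - m) * q) / ((q - m) * (q + r)) = 1 + m*r/((q-m)*(q+r)) := by
    field_simp; ring
  constructor
  · apply Real.log_nonneg
    rw [hΛarg]
    have : 0 ≤ m*r/((q-m)*(q+r)) := by positivity
    linarith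
  · have htr : (0:ℝ) < q + r - m := by linarith
    have h1 := Real.log_le_sub_one_of_pos
      (x := ((q + r - m) * q) / ((q - m) * (q + r)))
      (div_pos (mul_pos htr hq0) (mul_pos htm hs0))
    rw [hΛarg] at h1 ⊢
    have h2 : m*r/((q-m)*(q+r)) ≤ 2*m*r/q^2 := by
      rw [div_le_div_iff₀ (mul_pos htm hs0) (by positivity)]
      have hA : 3/4*(q*q) ≤ (q-m)*(q+r) := by nlinarith
      nlinarith [mul_le_mul_of_nonneg_left hA (by positivity : (0:ℝ) ≤ m*r),
        mul_pos (mul_pos hm0 hr0) (mul_pos hq0 hq0)]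
    linarith

lemma D_bound {q m r : ℝ} (hm1 : 1 ≤ m) (hr1 : 1 ≤ r) (hmq : 4*m ≤ q) (hrq : 4*r ≤ q) :
    |(-(m^2*r^3)/(2*q*(q+r)^3) - m^3*r^2*(2*q+(q+r))/(6*q^2*(q+r)^3))|
      ≤ (m^2*r^3 + m^3*r^2)/q^4 := by
  have hm0 : (0:ℝ) < m := by linarith
  have hr0 : (0:ℝ) < r := by linarith
  have hq0 : (0:ℝ) < q := by linarith
  have hs0 : (0:ℝ) < q + r := by linarith
  have hqs3 : q^3 ≤ (q+r)^3 := pow_le_pow_left₀ hq0.le (by linarith) 3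
  have hsc1 : q^4 ≤ 2*q*(q+r)^3 := by
    nlinarith [mul_le_mul_of_nonneg_left hqs3 (le_of_lt hq0), pow_pos hq0 4]
  have hsc2 : (2*q+(q+r))*q^4 ≤ 6*q^2*(q+r)^3 := by
    nlinarith [mul_le_mul_of_nonneg_left hqs3 (by positivity : (0:ℝ) ≤ 4*q^2),
      pow_pos hq0 4, pow_pos hq0 2, pow_pos hs0 3]
  have h1 : m^2*r^3/(2*q*(q+r)^3) ≤ m^2*r^3/q^4 := by
    rw [div_le_div_iff₀ (by positivity) (by positivity)]
    nlinarith [mul_le_mul_of_nonneg_left hsc1 (by positivity : (0:ℝ) ≤ m^2*r^3)]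
  have h2 : m^3*r^2*(2*q+(q+r))/(6*q^2*(q+r)^3) ≤ m^3*r^2/q^4 := by
    rw [div_le_div_iff₀ (by positivity) (by positivity)]
    nlinarith [mul_le_mul_of_nonneg_left hsc2 (by positivity : (0:ℝ) ≤ m^3*r^2)]
  have e : (-(m^2*r^3)/(2*q*(q+r)^3) - m^3*r^2*(2*q+(q+r))/(6*q^2*(q+r)^3))
      = -((m^2*r^3)/(2*q*(q+r)^3) + m^3*r^2*(2*q+(q+r))/(6*q^2*(q+r)^3)) := by ring
  rw [e, abs_neg, abs_of_nonneg (by positivity)]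
  have e2 : (m^2*r^3 + m^3*r^2)/q^4 = m^2*r^3/q^4 + m^3*r^2/q^4 := by ring
  linarith

set_option maxHeartbeats 1000000 in
lemma key {q m r : ℝ} (hm1 : 1 ≤ m) (hr1 : 1 ≤ r) (hmq : 4*m ≤ q) (hrq : 4*r ≤ q) :
    |((q - m - 1/2) * Real.log (((q + r - m) * q) / ((q - m) * (q + r)))
      + r * Real.log ((q + r - m) / (q + r))
      + m * Real.log (q / (q + r)))
      - (-(m * r / (q + r)) - m * r * (m + r) / (2 * (q + r)^2)
          - m * r * (m^2/3 + m*r/2 + r^2/3) / (q + r)^3)|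
    ≤ 3 * (m*r*(m^3+r^3)) / q^4 + m*r/q^2 := by
  have hm0 : (0:ℝ) < m := by linarith
  have hr0 : (0:ℝ) < r := by linarith
  have hq0 : (0:ℝ) < q := by linarith
  have hmq' : m < q := by linarith
  have hqs : q ≤ q + r := by linarith
  have hs0 : (0:ℝ) < q + r := by linarith
  have htm : (0:ℝ) < q - m := by linarith
  have htr : (0:ℝ) < q + r - m := by linarith
  -- FTC
  obtain ⟨I, hIb, hFTC⟩ : ∃ I : ℝ, |I| ≤ 2*m^4/q^4 * r ∧
      Hfun m (q+r) - Hfun m q = I := by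
    refine ⟨∫ x in q..(q+r), Rfun m x, ?_, ?_⟩
    · have hb := intervalIntegral.norm_integral_le_of_norm_le_const
        (C := 2*m^4/q^4) (f := Rfun m) (a := q) (b := q+r)
        (fun x hx => Rfun_bound hm0 hmq hx hqs)
      rw [Real.norm_eq_abs] at hb
      have e : |q + r - q| = r := by rw [show q + r - q = r by ring, abs_of_pos hr0]
      rw [e] at hb
      exact hb
    · exact (intervalIntegral.integral_eq_sub_of_hasDerivAt
        (fun x hx => Hfun_deriv hm0 (by rw [Set.uIcc_of_le hqs] at hx; linarith [hx.1]))
        ((Rfun_cont hm0 hmq' hqs).intervalIntegrable)).symm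
  simp only [Hfun] at hFTC
  have hM : q*Real.log q + (q+r-m)*Real.log (q+r-m) - (q-m)*Real.log (q-m)
      - (q+r)*Real.log (q+r)
      = -I - m*(Real.log (q+r) - Real.log q)
        + m^2/2*((q+r)⁻¹ - q⁻¹) + m^3/6*(((q+r)^2)⁻¹ - (q^2)⁻¹) := by
    linarith [hFTC]
  -- log expansions
  have hΛeq : Real.log (((q + r - m) * q) / ((q - m) * (q + r)))
      = Real.log (q+r-m) + Real.log q - Real.log (q-m) - Real.log (q+r) := by
    rw [Real.log_div (by positivity) (ne_of_gt (mul_pos htm hs0)),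
      Real.log_mul htr.ne' hq0.ne', Real.log_mul htm.ne' hs0.ne']
    ring
  have hlog2 : Real.log ((q + r - m) / (q + r)) = Real.log (q+r-m) - Real.log (q+r) :=
    Real.log_div htr.ne' hs0.ne'
  have hlog3 : Real.log (q / (q + r)) = Real.log q - Real.log (q+r) :=
    Real.log_div hq0.ne' hs0.ne'
  obtain ⟨hΛ0, hΛub⟩ := Lam_bound hm1 hr1 hmq hrq
  set Λ : ℝ := Real.log (((q + r - m) * q) / ((q - m) * (q + r))) with hΛdef
  set E2 : ℝ := Real.log (q+r) - Real.log q
      - (r/(q+r) + r^2/(2*(q+r)^2) + r^3/(3*(q+r)^3)) with hE2def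
  have hE2b : |E2| ≤ 2*r^4/q^4 := E2_bound hr1 hrq
  set D : ℝ := -(m^2*r^3)/(2*q*(q+r)^3) - m^3*r^2*(2*q+(q+r))/(6*q^2*(q+r)^3) with hDdef
  clear_value Λ E2 D
  have hDb : |D| ≤ (m^2*r^3 + m^3*r^2)/q^4 := by rw [hDdef]; exact D_bound hm1 hr1 hmq hrq
  -- the exact rational identity
  have hDid : -m*(r/(q+r) + r^2/(2*(q+r)^2) + r^3/(3*(q+r)^3))
      + m^2/2*((q+r)⁻¹ - q⁻¹) + m^3/6*(((q+r)^2)⁻¹ - (q^2)⁻¹)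
      - (-(m * r / (q + r)) - m * r * (m + r) / (2 * (q + r)^2)
          - m * r * (m^2/3 + m*r/2 + r^2/3) / (q + r)^3) = D := by
    rw [hDdef]; field_simp; ring
  -- linear assembly
  have hlin : ((q - m - 1/2) * Λ
      + r * Real.log ((q + r - m) / (q + r))
      + m * Real.log (q / (q + r)))
      - (-(m * r / (q + r)) - m * r * (m + r) / (2 * (q + r)^2)
          - m * r * (m^2/3 + m*r/2 + r^2/3) / (q + r)^3)
      = (-I) + (-(Λ/2)) + (-(m*E2)) + D := by
    rw [hlog2, hlog3, hΛeq, hE2def, ← hDid]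
    linarith [hM]
  rw [hlin]
  clear hFTC hM hlin hDid hΛeq hlog2 hlog3 hΛdef hE2def hDdef
  have t1 : |(-I) + (-(Λ/2)) + (-(m*E2)) + D| ≤ |I| + Λ/2 + m*|E2| + |D| := by
    calc |(-I) + (-(Λ/2)) + (-(m*E2)) + D|
        ≤ |(-I) + (-(Λ/2)) + (-(m*E2))| + |D| := abs_add_le _ _
      _ ≤ |(-I) + (-(Λ/2))| + |(-(m*E2))| + |D| := by linarith [abs_add_le ((-I) + (-(Λ/2))) (-(m*E2))]
      _ ≤ |I| + |Λ/2| + |(-(m*E2))| + |D| := by linarith [abs_add_le (-I) (-(Λ/2)), abs_neg I, abs_neg (Λ/2)]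
      _ ≤ |I| + Λ/2 + m*|E2| + |D| := by
          rw [abs_neg, abs_mul, abs_of_nonneg hm0.le, abs_of_nonneg (by linarith : (0:ℝ) ≤ Λ/2)]
  refine le_trans t1 ?_
  have hq4 : (0:ℝ) < q^4 := by positivity
  have hpoly : 2*(m^4*r) + 2*(m*r^4) + (m^2*r^3 + m^3*r^2) ≤ 3*(m*r*(m^3+r^3)) := by
    nlinarith [mul_nonneg (mul_nonneg hm0.le hr0.le)
      (mul_nonneg (add_nonneg hm0.le hr0.le) (sq_nonneg (m - r)))]
  have hIb' : |I| ≤ 2*(m^4*r)/q^4 := by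
    rw [show 2*(m^4*r)/q^4 = 2*m^4/q^4*r by ring]; exact hIb
  have hΛ2 : Λ/2 ≤ m*r/q^2 := by
    rw [show m*r/q^2 = (2*m*r/q^2)/2 by ring]; linarith
  have hE2m : m*|E2| ≤ 2*(m*r^4)/q^4 := by
    rw [show 2*(m*r^4)/q^4 = m*(2*r^4/q^4) by ring]
    exact mul_le_mul_of_nonneg_left hE2b hm0.le
  calc |I| + Λ/2 + m*|E2| + |D|
      ≤ 2*(m^4*r)/q^4 + m*r/q^2 + 2*(m*r^4)/q^4 + (m^2*r^3 + m^3*r^2)/q^4 :=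
        add_le_add (add_le_add (add_le_add hIb' hΛ2) hE2m) hDb
    _ = (2*(m^4*r) + 2*(m*r^4) + (m^2*r^3 + m^3*r^2))/q^4 + m*r/q^2 := by ring
    _ ≤ 3*(m*r*(m^3+r^3))/q^4 + m*r/q^2 :=
        add_le_add ((div_le_div_iff_of_pos_right hq4).mpr hpoly) le_rfl

lemma scale1 {nn q X : ℝ} (hn : 0 < nn) (hq : nn ≤ 2*q) (hq0 : 0 < q) (hX : 0 ≤ X) :
    nn * (3*X/q^4) ≤ 48*(X/nn^3) := by
  have e1 : nn*(3*X/q^4) = (3*X*nn)/q^4 := by ring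
  have e2 : 48*(X/nn^3) = (48*X)/nn^3 := by ring
  rw [e1, e2, div_le_div_iff₀ (by positivity) (by positivity)]
  have h4 : nn^4 ≤ 16*q^4 := by nlinarith [pow_le_pow_left₀ hn.le hq 4]
  nlinarith [mul_le_mul_of_nonneg_left h4 hX, pow_pos hn 3, pow_pos hq0 4,
    mul_nonneg hX (pow_pos hn 4).le]

lemma scale2 {nn q Y : ℝ} (hn : 0 < nn) (hq : nn ≤ 2*q) (hq0 : 0 < q) (hY : 0 ≤ Y) :
    nn * (Y/q^2) ≤ 48*(Y/nn) := by
  have e1 : nn*(Y/q^2) = (Y*nn)/q^2 := by ring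
  have e2 : 48*(Y/nn) = (48*Y)/nn := by ring
  rw [e1, e2, div_le_div_iff₀ (by positivity) (by positivity)]
  have h2 : nn^2 ≤ 4*q^2 := by nlinarith
  nlinarith [mul_le_mul_of_nonneg_left h2 hY]

/-- Lemma (expansion of `μₙ`): under `n > p + m`, `p ≥ r ≥ 1`, `m·r → ∞` and
`max{p,m,r}/n → 0`, one has
`μₙ = −nmr/(n+r−p) − nmr(m+r)/(2(n+r−p)²) − nmr(m²/3+mr/2+r²/3)/(n+r−p)³
 + O(mr(m³+r³)/n³) + O(mr/n)`. -/
theorem muN_expansion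
    (p m r : ℕ → ℕ)
    (h : ∀ᶠ n in atTop, 1 ≤ r n ∧ r n ≤ p n ∧ p n + m n < n)
    (hmr : Tendsto (fun n => (m n : ℝ) * r n) atTop atTop)
    (hmax : Tendsto (fun (n : ℕ) => (max (p n) (max (m n) (r n)) : ℝ) / n) atTop (nhds 0)) :
    ∃ C > (0 : ℝ), ∃ N : ℕ, ∀ n ≥ N,
      |muN p m r n -
          (-(n : ℝ) * m n * r n / ((n : ℝ) + r n - p n)
            - (n : ℝ) * m n * r n * ((m n : ℝ) + r n) / (2 * ((n : ℝ) + r n - p n) ^ 2)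
            - (n : ℝ) * m n * r n *
                ((m n : ℝ) ^ 2 / 3 + (m n : ℝ) * r n / 2 + (r n : ℝ) ^ 2 / 3) /
                ((n : ℝ) + r n - p n) ^ 3)| ≤
        C * ((m n : ℝ) * r n * ((m n : ℝ) ^ 3 + (r n : ℝ) ^ 3) / (n : ℝ) ^ 3
              + (m n : ℝ) * r n / n) := by
  refine ⟨48, by norm_num, ?_⟩
  have hev := (h.and ((hmax.eventually (eventually_lt_nhds (by norm_num : (0:ℝ) < 1/8))).and
    ((hmr.eventually_ge_atTop 1).and (eventually_ge_atTop 1))))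
  obtain ⟨N, hN⟩ := eventually_atTop.mp hev
  refine ⟨N, fun n hn => ?_⟩
  obtain ⟨⟨hr1, _, hpm⟩, hmax8, hmr1, hn1⟩ := hN n hn
  have hn0 : (0:ℝ) < n := by
    have : (1:ℝ) ≤ n := by exact_mod_cast hn1
    linarith
  have hmaxlt : (max (↑(p n)) (max (↑(m n)) (↑(r n))) : ℝ) < (n:ℝ)/8 := by
    have := (div_lt_iff₀ hn0).mp hmax8
    linarith
  have hp8 : (p n : ℝ) < (n:ℝ)/8 := lt_of_le_of_lt (le_max_left _ _) hmaxlt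
  have hm8 : (m n : ℝ) < (n:ℝ)/8 :=
    lt_of_le_of_lt (le_trans (le_max_left _ _) (le_max_right _ _)) hmaxlt
  have hr8 : (r n : ℝ) < (n:ℝ)/8 :=
    lt_of_le_of_lt (le_trans (le_max_right _ _) (le_max_right _ _)) hmaxlt
  have hm1 : (1:ℝ) ≤ (m n : ℝ) := by
    rcases Nat.eq_zero_or_pos (m n) with h0 | h0
    · rw [h0] at hmr1; norm_num at hmr1
    · exact_mod_cast h0
  have hr1' : (1:ℝ) ≤ (r n : ℝ) := by exact_mod_cast hr1
  have h4m : 4*(m n:ℝ) ≤ (n:ℝ) - p n := by linarith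
  have h4r : 4*(r n:ℝ) ≤ (n:ℝ) - p n := by linarith
  have hq0 : (0:ℝ) < (n:ℝ) - p n := by linarith
  have hq2 : (n:ℝ) ≤ 2*((n:ℝ) - p n) := by linarith
  have hkey := key hm1 hr1' h4m h4r
  have hX : (0:ℝ) ≤ (m n:ℝ) * r n * ((m n:ℝ)^3 + (r n:ℝ)^3) := by positivity
  have hY : (0:ℝ) ≤ (m n:ℝ) * (r n:ℝ) := by positivity
  have hrw : muN p m r n -
          (-(n : ℝ) * m n * r n / ((n : ℝ) + r n - p n)
            - (n : ℝ) * m n * r n * ((m n : ℝ) + r n) / (2 * ((n : ℝ) + r n - p n) ^ 2)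
            - (n : ℝ) * m n * r n *
                ((m n : ℝ) ^ 2 / 3 + (m n : ℝ) * r n / 2 + (r n : ℝ) ^ 2 / 3) /
                ((n : ℝ) + r n - p n) ^ 3)
      = (n:ℝ) * ((((n:ℝ) - p n) - m n - 1/2) *
          Real.log ((((n:ℝ) - p n) + r n - m n) * ((n:ℝ) - p n) /
            ((((n:ℝ) - p n) - m n) * (((n:ℝ) - p n) + r n)))
        + (r n : ℝ) * Real.log ((((n:ℝ) - p n) + r n - m n) / (((n:ℝ) - p n) + r n))
        + (m n : ℝ) * Real.log (((n:ℝ) - p n) / (((n:ℝ) - p n) + r n))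
        - (-((m n:ℝ) * r n / (((n:ℝ) - p n) + r n))
          - (m n:ℝ) * r n * ((m n:ℝ) + r n) / (2 * (((n:ℝ) - p n) + r n)^2)
          - (m n:ℝ) * r n * ((m n:ℝ)^2/3 + (m n:ℝ)*(r n:ℝ)/2 + (r n:ℝ)^2/3)
              / (((n:ℝ) - p n) + r n)^3)) := by
    simp only [muN]
    rw [show (n:ℝ) + (r n:ℝ) - (p n:ℝ) = ((n:ℝ) - (p n:ℝ)) + (r n:ℝ) from by ring]
    ring
  rw [hrw, abs_mul, abs_of_nonneg hn0.le]
  refine le_trans (mul_le_mul_of_nonneg_left hkey hn0.le) ?_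
  calc (n:ℝ) * (3 * ((m n:ℝ)*(r n:ℝ)*((m n:ℝ)^3+(r n:ℝ)^3)) / ((n:ℝ) - p n)^4
        + (m n:ℝ)*(r n:ℝ)/((n:ℝ) - p n)^2)
      = (n:ℝ) * (3*((m n:ℝ)*(r n:ℝ)*((m n:ℝ)^3+(r n:ℝ)^3))/((n:ℝ) - p n)^4)
        + (n:ℝ) * (((m n:ℝ)*(r n:ℝ))/((n:ℝ) - p n)^2) := by ring
    _ ≤ 48*(((m n:ℝ)*(r n:ℝ)*((m n:ℝ)^3+(r n:ℝ)^3))/(n:ℝ)^3)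
        + 48*(((m n:ℝ)*(r n:ℝ))/(n:ℝ)) :=
      add_le_add (scale1 hn0 hq2 hq0 hX) (scale2 hn0 hq2 hq0 hY)
    _ = 48 * ((m n : ℝ) * r n * ((m n : ℝ) ^ 3 + (r n : ℝ) ^ 3) / (n : ℝ) ^ 3
              + (m n : ℝ) * r n / n) := by ring
end

section
/- Under the asymptotic regime in which n → ∞ with n > p + m, p ≥ r ≥ 1, m·r → ∞ and max{p, m, r}/n → 0, one has (μₙ + m·r)/√(2·m·r) → 0 as n → ∞ if and only if lim_{n→∞} √(m·r)·(p + m/2 − r/2)/n = 0. -/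
open Filter

noncomputable def phiA (x : ℝ) : ℝ := (x - 1/2) * Real.log x

lemma phiA_hasDeriv {x : ℝ} (hx : 0 < x) :
    HasDerivAt phiA (Real.log x + 1 - 1/(2*x)) x := by
  have h := ((hasDerivAt_id x).sub_const (1/2 : ℝ)).mul (Real.hasDerivAt_log hx.ne')
  refine h.congr_deriv ?_
  simp only [id_eq]
  field_simp
  ring

lemma secondDiff_le (f f' f'' : ℝ → ℝ) (a b : ℝ)
    (hd1 : ∀ x ∈ Set.Icc a b, HasDerivAt f (f' x) x)
    (hd2 : ∀ x ∈ Set.Icc a b, HasDerivAt f' (f'' x) x)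
    (h2 : ∀ x ∈ Set.Icc a b, 0 ≤ f'' x)
    (c : ℝ) (hc : 0 ≤ c) (hab : a + c ≤ b) :
    f (a + c) + f (b - c) ≤ f a + f b := by
  have hmono : MonotoneOn f' (Set.Icc a b) := by
    apply monotoneOn_of_deriv_nonneg (convex_Icc a b)
    · exact fun x hx => (hd2 x hx).continuousAt.continuousWithinAt
    · exact fun x hx => ((hd2 x (interior_subset hx)).differentiableAt).differentiableWithinAt
    · intro x hx
      rw [(hd2 x (interior_subset hx)).deriv]
      exact h2 x (interior_subset hx)
  have hsub : Set.Icc a (b - c) ⊆ Set.Icc a b := Set.Icc_subset_Icc le_rfl (by linarith)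
  have hD : ∀ x ∈ Set.Icc a (b - c),
      HasDerivAt (fun y => f (y + c) - f y) (f' (x + c) * 1 - f' x) x := by
    intro x hx
    have hx1 : x ∈ Set.Icc a b := hsub hx
    have hx2 : x + c ∈ Set.Icc a b := ⟨by linarith [hx.1], by linarith [hx.2]⟩
    exact ((hd1 _ hx2).comp x ((hasDerivAt_id x).add_const c)).sub (hd1 x hx1)
  have hg : MonotoneOn (fun y => f (y + c) - f y) (Set.Icc a (b - c)) := by
    apply monotoneOn_of_deriv_nonneg (convex_Icc a (b - c))
    · exact fun x hx => (hD x hx).continuousAt.continuousWithinAt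
    · exact fun x hx => ((hD x (interior_subset hx)).differentiableAt).differentiableWithinAt
    · intro x hx
      rw [(hD x (interior_subset hx)).deriv]
      have hx0 := interior_subset hx
      have hx1 : x ∈ Set.Icc a b := hsub hx0
      have hx2 : x + c ∈ Set.Icc a b := ⟨by linarith [hx0.1], by linarith [hx0.2]⟩
      have := hmono hx1 hx2 (by linarith)
      linarith
  have h1 : a ∈ Set.Icc a (b - c) := ⟨le_rfl, by linarith⟩
  have h2' : b - c ∈ Set.Icc a (b - c) := ⟨by linarith, le_rfl⟩
  have := hg h1 h2' (by linarith)
  simp only [sub_add_cancel] at this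
  linarith



set_option maxHeartbeats 1000000

lemma sandwich_low {pp mm rr nn : ℝ} (hr1 : 1 ≤ rr) (hrp : rr ≤ pp) (hm : 1 ≤ mm) (hn : pp + mm ≤ nn/2) :
    mm*rr + mm*rr*(pp + mm/2 - rr/2)/nn
      ≤ nn * (phiA (nn - pp - mm) + phiA (nn + rr - pp) - phiA (nn - pp)
          - phiA (nn + rr - pp - mm)) := by
  have ha0 : (0:ℝ) < nn - pp - mm := by nlinarith
  have hn0 : (0:ℝ) < nn := by nlinarith
  have hab : nn - pp - mm + mm ≤ nn + rr - pp := by linarith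
  have hxpos : ∀ x ∈ Set.Icc (nn - pp - mm) (nn + rr - pp), (0:ℝ) < x :=
    fun x hx => lt_of_lt_of_le ha0 hx.1
  have hd1 : ∀ x ∈ Set.Icc (nn - pp - mm) (nn + rr - pp),
      HasDerivAt (fun y : ℝ => phiA y - (y^2/nn - y^3/(6*nn^2)))
        (Real.log x + 1 - 1/2 * x⁻¹ - 2*x/nn + x^2/(2*nn^2)) x := by
    intro x hx
    have hx0 := hxpos x hx
    have hp := ((hasDerivAt_pow 2 x).div_const nn).sub ((hasDerivAt_pow 3 x).div_const (6*nn^2))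
    have h := (phiA_hasDeriv hx0).sub hp
    refine h.congr_deriv ?_
    push_cast
    field_simp
    ring
  have hd2 : ∀ x ∈ Set.Icc (nn - pp - mm) (nn + rr - pp),
      HasDerivAt (fun y : ℝ => Real.log y + 1 - 1/2 * y⁻¹ - 2*y/nn + y^2/(2*nn^2))
        (x⁻¹ + 1/2 * (x^2)⁻¹ - 2/nn + x/nn^2) x := by
    intro x hx
    have hx0 := hxpos x hx
    have h1 := ((Real.hasDerivAt_log hx0.ne').add_const 1).sub
      ((hasDerivAt_inv hx0.ne').const_mul (1/2 : ℝ))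
    have h2 := ((hasDerivAt_id x).const_mul (2:ℝ)).div_const nn
    have h3 := (hasDerivAt_pow 2 x).div_const (2*nn^2)
    have h := (h1.sub h2).add h3
    refine h.congr_deriv ?_
    push_cast
    field_simp
    ring
  have h2 : ∀ x ∈ Set.Icc (nn - pp - mm) (nn + rr - pp),
      0 ≤ x⁻¹ + 1/2 * (x^2)⁻¹ - 2/nn + x/nn^2 := by
    intro x hx
    have hx0 := hxpos x hx
    have key : x⁻¹ - 2/nn + x/nn^2 = (nn - x)^2/(x*nn^2) := by field_simp; ring
    have k1 : (0:ℝ) ≤ (nn - x)^2/(x*nn^2) := by positivity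
    have k2 : (0:ℝ) ≤ 1/2 * (x^2)⁻¹ := by positivity
    linarith [key ▸ k1]
  have hkey := secondDiff_le _ _ _ _ _ hd1 hd2 h2 mm (by linarith) hab
  have e1 : nn - pp - mm + mm = nn - pp := by ring
  rw [e1] at hkey
  -- hkey : phiA (nn-pp) - Q(nn-pp) + (phiA (nn+rr-pp-mm) - Q(nn+rr-pp-mm))
  --          ≤ phiA (nn-pp-mm) - Q(nn-pp-mm) + (phiA (nn+rr-pp) - Q(nn+rr-pp))
  have hdiff : ((nn-pp-mm)^2/nn - (nn-pp-mm)^3/(6*nn^2)) + ((nn+rr-pp)^2/nn - (nn+rr-pp)^3/(6*nn^2))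
      - ((nn-pp)^2/nn - (nn-pp)^3/(6*nn^2)) - ((nn+rr-pp-mm)^2/nn - (nn+rr-pp-mm)^3/(6*nn^2))
      ≤ phiA (nn - pp - mm) + phiA (nn + rr - pp) - phiA (nn - pp) - phiA (nn + rr - pp - mm) := by
    linarith [hkey]
  have hmul := mul_le_mul_of_nonneg_left hdiff hn0.le
  have hpoly : nn * (((nn-pp-mm)^2/nn - (nn-pp-mm)^3/(6*nn^2)) + ((nn+rr-pp)^2/nn - (nn+rr-pp)^3/(6*nn^2))
      - ((nn-pp)^2/nn - (nn-pp)^3/(6*nn^2)) - ((nn+rr-pp-mm)^2/nn - (nn+rr-pp-mm)^3/(6*nn^2)))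
      = mm*rr + mm*rr*(pp + mm/2 - rr/2)/nn := by
    field_simp
    ring
  linarith [hmul, hpoly.symm.le, hpoly.le]


lemma sandwich_up {pp mm rr nn a b : ℝ} (hr1 : 1 ≤ rr) (hrp : rr ≤ pp) (hm : 1 ≤ mm)
    (hn : pp + mm ≤ nn/2) (ha : a = nn - pp - mm) (hb : b = nn + rr - pp) :
    nn * (phiA a + phiA b - phiA (nn - pp) - phiA (b - mm))
      ≤ mm*rr + 12*(mm*rr*(pp + mm/2 - rr/2)/nn) + 2*mm*rr/nn := by
  have ha0 : (0:ℝ) < a := by rw [ha]; nlinarith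
  have hn0 : (0:ℝ) < nn := by nlinarith
  have hb0 : (0:ℝ) < b := by rw [hb]; nlinarith
  have hmr0 : (0:ℝ) ≤ mm * rr := by nlinarith
  have hab : a + mm ≤ b := by rw [ha, hb]; linarith
  have hxpos : ∀ x ∈ Set.Icc a b, (0:ℝ) < x := fun x hx => lt_of_lt_of_le ha0 hx.1
  have hd1 : ∀ x ∈ Set.Icc a b,
      HasDerivAt (fun y : ℝ => ((a+b)*y^2/(2*(a*b)) - y^3/(6*(a*b)) + y^2/(4*a^2)) - phiA y)
        (((a+b)*x/(a*b) - x^2/(2*(a*b)) + x/(2*a^2)) - (Real.log x + 1 - 1/(2*x))) x := by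
    intro x hx
    have hx0 := hxpos x hx
    have hA := ((hasDerivAt_pow 2 x).const_mul (a+b)).div_const (2*(a*b))
    have hB := (hasDerivAt_pow 3 x).div_const (6*(a*b))
    have hC := (hasDerivAt_pow 2 x).div_const (4*a^2)
    have h := ((hA.sub hB).add hC).sub (phiA_hasDeriv hx0)
    refine h.congr_deriv ?_
    push_cast
    field_simp
    ring
  have hd2 : ∀ x ∈ Set.Icc a b,
      HasDerivAt (fun y : ℝ => ((a+b)*y/(a*b) - y^2/(2*(a*b)) + y/(2*a^2)) - (Real.log y + 1 - 1/(2*y)))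
        ((((a+b)/(a*b) - x/(a*b) + 1/(2*a^2))) - (x⁻¹ + 1/2 * (x^2)⁻¹)) x := by
    intro x hx
    have hx0 := hxpos x hx
    have hA := ((hasDerivAt_id x).const_mul (a+b)).div_const (a*b)
    have hB := (hasDerivAt_pow 2 x).div_const (2*(a*b))
    have hC := (hasDerivAt_id x).div_const (2*a^2)
    have hlog : HasDerivAt (fun y : ℝ => Real.log y + 1 - 1/(2*y)) (x⁻¹ - (1/2) * (-(x^2)⁻¹)) x := by
      have h1 := ((Real.hasDerivAt_log hx0.ne').add_const 1).sub
        ((hasDerivAt_inv hx0.ne').const_mul (1/2 : ℝ))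
      refine h1.congr_of_eventuallyEq (Filter.Eventually.of_forall fun y => ?_)
      · simp only [Pi.sub_apply]; ring
    have h := ((hA.sub hB).add hC).sub hlog
    refine h.congr_deriv ?_
    push_cast
    field_simp
    ring
  have h2 : ∀ x ∈ Set.Icc a b,
      0 ≤ (((a+b)/(a*b) - x/(a*b) + 1/(2*a^2))) - (x⁻¹ + 1/2 * (x^2)⁻¹) := by
    intro x hx
    have hx0 := hxpos x hx
    have key1 : (a+b)/(a*b) - x/(a*b) - x⁻¹ = (x-a)*(b-x)/(a*b*x) := by
      field_simp; ring
    have key2 : 1/(2*a^2) - 1/2 * (x^2)⁻¹ = (x^2-a^2)/(2*a^2*x^2) := by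
      field_simp
    have k1 : (0:ℝ) ≤ (x-a)*(b-x)/(a*b*x) := by
      apply div_nonneg (mul_nonneg (by linarith [hx.1]) (by linarith [hx.2]))
      positivity
    have k2 : (0:ℝ) ≤ (x^2-a^2)/(2*a^2*x^2) := by
      apply div_nonneg _ (by positivity)
      nlinarith [hx.1]
    linarith [key1 ▸ k1, key2 ▸ k2]
  have hkey := secondDiff_le _ _ _ _ _ hd1 hd2 h2 mm (by linarith) hab
  have e1 : a + mm = nn - pp := by rw [ha]; ring
  rw [e1] at hkey
  have hdiff : phiA a + phiA b - phiA (nn - pp) - phiA (b - mm)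
      ≤ ((a+b)*a^2/(2*(a*b)) - a^3/(6*(a*b)) + a^2/(4*a^2))
        + ((a+b)*b^2/(2*(a*b)) - b^3/(6*(a*b)) + b^2/(4*a^2))
        - ((a+b)*(nn-pp)^2/(2*(a*b)) - (nn-pp)^3/(6*(a*b)) + (nn-pp)^2/(4*a^2))
        - ((a+b)*(b-mm)^2/(2*(a*b)) - (b-mm)^3/(6*(a*b)) + (b-mm)^2/(4*a^2)) := by
    linarith [hkey]
  have hmul := mul_le_mul_of_nonneg_left hdiff hn0.le
  have hQid : nn * (((a+b)*a^2/(2*(a*b)) - a^3/(6*(a*b)) + a^2/(4*a^2))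
        + ((a+b)*b^2/(2*(a*b)) - b^3/(6*(a*b)) + b^2/(4*a^2))
        - ((a+b)*(nn-pp)^2/(2*(a*b)) - (nn-pp)^3/(6*(a*b)) + (nn-pp)^2/(4*a^2))
        - ((a+b)*(b-mm)^2/(2*(a*b)) - (b-mm)^3/(6*(a*b)) + (b-mm)^2/(4*a^2)))
      = mm*rr*(nn*(2*(nn-pp)+rr-mm))/(2*(a*b)) + nn*mm*rr/(2*a^2) := by
    rw [ha, hb]
    have h1 : nn - pp - mm ≠ 0 := by nlinarith
    have h2' : nn + rr - pp ≠ 0 := by nlinarith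
    field_simp
    ring
  have h2a : nn ≤ 2*a := by rw [ha]; linarith
  have hP1 : nn*mm*rr/(2*a^2) ≤ 2*mm*rr/nn := by
    rw [div_le_div_iff₀ (by positivity) hn0]
    nlinarith [mul_le_mul_of_nonneg_left (mul_le_mul h2a h2a hn0.le (by positivity)) hmr0]
  have hKbound : nn*(2*(nn-pp)+rr-mm) - 2*(a*b) ≤ 3*nn*(2*pp+mm-rr) := by
    rw [ha, hb]
    nlinarith [mul_nonneg (by linarith : (0:ℝ) ≤ pp - rr) hn0.le,
      mul_nonneg (by linarith : (0:ℝ) ≤ nn - 2*rr) (by linarith : (0:ℝ) ≤ pp),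
      mul_nonneg (by linarith : (0:ℝ) ≤ nn - rr) (by linarith : (0:ℝ) ≤ mm),
      mul_nonneg (by linarith : (0:ℝ) ≤ pp) (by linarith : (0:ℝ) ≤ mm),
      sq_nonneg pp, sq_nonneg (pp - rr)]
  have habpos : (0:ℝ) < a * b := by positivity
  have hsplit : mm*rr*(nn*(2*(nn-pp)+rr-mm))/(2*(a*b))
      = mm*rr + mm*rr*(nn*(2*(nn-pp)+rr-mm) - 2*(a*b))/(2*(a*b)) := by
    field_simp
    ring
  have hstep : mm*rr*(nn*(2*(nn-pp)+rr-mm) - 2*(a*b))/(2*(a*b))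
      ≤ mm*rr*(3*nn*(2*pp+mm-rr))/(2*(a*b)) := by
    gcongr
  have hlast : mm*rr*(3*nn*(2*pp+mm-rr))/(2*(a*b)) ≤ 12*(mm*rr*(pp + mm/2 - rr/2)/nn) := by
    have e12 : 12*(mm*rr*(pp + mm/2 - rr/2)/nn) = (12*(mm*rr*(pp + mm/2 - rr/2)))/nn := by
      ring
    rw [e12, div_le_div_iff₀ (by positivity) hn0]
    nlinarith [mul_le_mul_of_nonneg_left (mul_le_mul h2a (le_trans h2a (by linarith [hb, ha, hr1] : 2*a ≤ 2*b)) hn0.le (by positivity))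
      (mul_nonneg hmr0 (by linarith : (0:ℝ) ≤ 2*pp+mm-rr))]
  linarith [hmul, hQid, hsplit, hstep, hlast, hP1]

lemma muN_eq_phi (pp mm rr nn : ℝ) (h1 : 0 < nn - pp - mm) (hr : 0 < rr) (hm : 0 ≤ mm) :
    nn * (nn - mm - pp - 1/2) *
        Real.log (((nn + rr - pp - mm) * (nn - pp)) / ((nn - pp - mm) * (nn + rr - pp)))
      + nn * rr * Real.log ((nn + rr - pp - mm) / (nn + rr - pp))
      + nn * mm * Real.log ((nn - pp) / (nn + rr - pp))
    = nn * (phiA (nn + rr - pp - mm) + phiA (nn - pp) - phiA (nn - pp - mm)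
        - phiA (nn + rr - pp)) := by
  have hA : 0 < nn + rr - pp - mm := by linarith
  have hB : 0 < nn - pp := by linarith
  have hC : 0 < nn - pp - mm := h1
  have hD : 0 < nn + rr - pp := by linarith
  rw [Real.log_div (by positivity) (by positivity), Real.log_mul hA.ne' hB.ne',
    Real.log_mul hC.ne' hD.ne', Real.log_div hA.ne' hD.ne', Real.log_div hB.ne' hD.ne']
  unfold phiA
  ring

lemma core {pp mm rr nn mx : ℝ} (hr1 : 1 ≤ rr) (hrp : rr ≤ pp) (hm1 : 1 ≤ mm)
    (hp8 : pp ≤ nn/8) (hm8 : mm ≤ nn/8) (hn1 : 1 ≤ nn)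
    (hmx_m : mm ≤ mx) (hmx_r : rr ≤ mx)
    {val : ℝ}
    (hval : val = nn * (phiA (nn + rr - pp - mm) + phiA (nn - pp) - phiA (nn - pp - mm)
        - phiA (nn + rr - pp))) :
    0 ≤ Real.sqrt (mm*rr) * (pp + mm/2 - rr/2) / nn
    ∧ Real.sqrt (mm*rr) * (pp + mm/2 - rr/2) / nn / Real.sqrt 2
        ≤ -((val + mm*rr) / Real.sqrt (2*mm*rr))
    ∧ -((val + mm*rr) / Real.sqrt (2*mm*rr))
        ≤ 9 * (Real.sqrt (mm*rr) * (pp + mm/2 - rr/2) / nn) + 2 * (mx/nn) := by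
  have hn0 : (0:ℝ) < nn := by linarith
  have hhalf : pp + mm ≤ nn/2 := by linarith
  have hY : (0:ℝ) ≤ pp + mm/2 - rr/2 := by linarith
  have hmr1 : (1:ℝ) ≤ mm*rr := by nlinarith
  have hmr0 : (0:ℝ) < mm*rr := by linarith
  have hsqmr : (0:ℝ) < Real.sqrt (mm*rr) := Real.sqrt_pos.2 hmr0
  have hs2 : (0:ℝ) < Real.sqrt 2 := Real.sqrt_pos.2 (by norm_num)
  have hcs : Real.sqrt (2*mm*rr) = Real.sqrt 2 * Real.sqrt (mm*rr) := by
    rw [mul_assoc, Real.sqrt_mul (by norm_num : (0:ℝ) ≤ 2)]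
  have hc : (0:ℝ) < Real.sqrt (2*mm*rr) := by rw [hcs]; positivity
  have hmulself : Real.sqrt (mm*rr) * Real.sqrt (mm*rr) = mm*rr :=
    Real.mul_self_sqrt hmr0.le
  have hS0 : 0 ≤ Real.sqrt (mm*rr) * (pp + mm/2 - rr/2) / nn :=
    div_nonneg (mul_nonneg hsqmr.le hY) hn0.le
  have hvalD : val = -(nn * (phiA (nn - pp - mm) + phiA (nn + rr - pp) - phiA (nn - pp)
      - phiA (nn + rr - pp - mm))) := by rw [hval]; ring
  have hA : mm*rr*(pp + mm/2 - rr/2)/nn ≤ -(val + mm*rr) := by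
    have := sandwich_low hr1 hrp hm1 hhalf
    rw [hvalD]; linarith
  have hB : -(val + mm*rr) ≤ 12*(mm*rr*(pp + mm/2 - rr/2)/nn) + 2*mm*rr/nn := by
    have := sandwich_up hr1 hrp hm1 hhalf rfl rfl
    rw [hvalD]; linarith
  have hEq : Real.sqrt (mm*rr) * (pp + mm/2 - rr/2) / nn / Real.sqrt 2
      = (mm*rr*(pp + mm/2 - rr/2)/nn) / Real.sqrt (2*mm*rr) := by
    rw [hcs, div_eq_div_iff hs2.ne' (mul_pos hs2 hsqmr).ne']
    linear_combination (Real.sqrt 2 * (pp + mm/2 - rr/2)/nn) * hmulself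
  refine ⟨hS0, ?_, ?_⟩
  · have h0 : -((val + mm*rr) / Real.sqrt (2*mm*rr))
        = (-(val + mm*rr)) / Real.sqrt (2*mm*rr) := by ring
    rw [h0, hEq]
    gcongr
  · have h1 : -((val + mm*rr) / Real.sqrt (2*mm*rr)) = (-(val + mm*rr)) / Real.sqrt (2*mm*rr) := by
      ring
    rw [h1]
    have h2 : (-(val + mm*rr)) / Real.sqrt (2*mm*rr)
        ≤ (12*(mm*rr*(pp + mm/2 - rr/2)/nn) + 2*mm*rr/nn) / Real.sqrt (2*mm*rr) := by
      gcongr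
    have h3 : (12*(mm*rr*(pp + mm/2 - rr/2)/nn) + 2*mm*rr/nn) / Real.sqrt (2*mm*rr)
        = 12*((mm*rr*(pp + mm/2 - rr/2)/nn) / Real.sqrt (2*mm*rr))
          + 2*((mm*rr / Real.sqrt (2*mm*rr))/nn) := by ring
    have hmrc : mm*rr / Real.sqrt (2*mm*rr) = Real.sqrt (mm*rr) / Real.sqrt 2 := by
      rw [hcs, div_eq_div_iff (mul_pos hs2 hsqmr).ne' hs2.ne']
      linear_combination (-Real.sqrt 2) * hmulself
    have hsqmx : Real.sqrt (mm*rr) ≤ mx := by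
      have h4 : mm*rr ≤ mx*mx := by nlinarith
      calc Real.sqrt (mm*rr) ≤ Real.sqrt (mx*mx) := Real.sqrt_le_sqrt h4
        _ = mx := Real.sqrt_mul_self (by linarith)
    have h15 : (1:ℝ) ≤ Real.sqrt 2 := by
      nlinarith [Real.sq_sqrt (show (0:ℝ) ≤ 2 by norm_num), Real.sqrt_nonneg 2]
    have hterm2 : 2*((mm*rr / Real.sqrt (2*mm*rr))/nn) ≤ 2*(mx/nn) := by
      rw [hmrc]
      gcongr
      calc Real.sqrt (mm*rr) / Real.sqrt 2 ≤ Real.sqrt (mm*rr) := div_le_self hsqmr.le h15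
        _ ≤ mx := hsqmx
    have hterm1 : 12*((mm*rr*(pp + mm/2 - rr/2)/nn) / Real.sqrt (2*mm*rr))
        ≤ 9 * (Real.sqrt (mm*rr) * (pp + mm/2 - rr/2) / nn) := by
      rw [← hEq]
      have h42 : (4/3:ℝ) ≤ Real.sqrt 2 := by
        nlinarith [Real.sq_sqrt (show (0:ℝ) ≤ 2 by norm_num), Real.sqrt_nonneg 2]
      have e5 : 12*(Real.sqrt (mm*rr) * (pp + mm/2 - rr/2) / nn / Real.sqrt 2)
          = 12*(Real.sqrt (mm*rr) * (pp + mm/2 - rr/2) / nn) / Real.sqrt 2 := by ring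
      rw [e5, div_le_iff₀ hs2]
      nlinarith [hS0, mul_le_mul_of_nonneg_left h42
        (by linarith : (0:ℝ) ≤ 9*(Real.sqrt (mm*rr) * (pp + mm/2 - rr/2) / nn))]
    linarith [h2, h3.le, h3.ge, hterm1, hterm2]

/-- Under `n > p + m`, `p ≥ r ≥ 1`, `m·r → ∞` and `max{p,m,r}/n → 0`:
`(μₙ + mr)/√(2mr) → 0` iff `√(mr)·(p + m/2 − r/2)/n → 0`. -/
theorem muN_centering_boundary
    (p m r : ℕ → ℕ)
    (h : ∀ᶠ n in atTop, 1 ≤ r n ∧ r n ≤ p n ∧ p n + m n < n)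
    (hmr : Tendsto (fun n => (m n : ℝ) * r n) atTop atTop)
    (hmax : Tendsto (fun (n : ℕ) => (max (p n) (max (m n) (r n)) : ℝ) / n) atTop (nhds 0)) :
    Tendsto (fun (n : ℕ) =>
        (muN p m r n + (m n : ℝ) * r n) / Real.sqrt (2 * (m n : ℝ) * r n))
      atTop (nhds 0)
    ↔ Tendsto (fun (n : ℕ) =>
        Real.sqrt ((m n : ℝ) * r n) * ((p n : ℝ) + (m n : ℝ) / 2 - (r n : ℝ) / 2) / n)
        atTop (nhds 0) := by
  have hm1ev : ∀ᶠ n in atTop, (1:ℝ) ≤ (m n : ℝ) * r n := hmr.eventually_ge_atTop 1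
  have hsm := hmax.eventually (gt_mem_nhds (by norm_num : (0:ℝ) < 1/8))
  have hn1 : ∀ᶠ n : ℕ in atTop, 1 ≤ n := eventually_ge_atTop 1
  have key : ∀ᶠ n : ℕ in atTop,
      0 ≤ Real.sqrt ((m n : ℝ) * r n) * ((p n : ℝ) + (m n : ℝ)/2 - (r n : ℝ)/2) / n
      ∧ Real.sqrt ((m n : ℝ) * r n) * ((p n : ℝ) + (m n : ℝ)/2 - (r n : ℝ)/2) / n / Real.sqrt 2
          ≤ -((muN p m r n + (m n : ℝ) * r n) / Real.sqrt (2 * (m n : ℝ) * r n))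
      ∧ -((muN p m r n + (m n : ℝ) * r n) / Real.sqrt (2 * (m n : ℝ) * r n))
          ≤ 9 * (Real.sqrt ((m n : ℝ) * r n) * ((p n : ℝ) + (m n : ℝ)/2 - (r n : ℝ)/2) / n)
            + 2 * ((max (p n) (max (m n) (r n)) : ℝ) / n) := by
    filter_upwards [h, hm1ev, hsm, hn1] with n hcond hmr1 hsmall hn1'
    obtain ⟨hr1, hrp, hpmn⟩ := hcond
    have hrn : (1:ℝ) ≤ (r n : ℝ) := by exact_mod_cast hr1
    have hrpR : ((r n : ℕ) : ℝ) ≤ ((p n : ℕ) : ℝ) := by exact_mod_cast hrp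
    have hm0 : 1 ≤ m n := by
      rcases Nat.eq_zero_or_pos (m n) with h0 | h0
      · rw [h0] at hmr1; norm_num at hmr1
      · exact h0
    have hmR : (1:ℝ) ≤ (m n : ℝ) := by exact_mod_cast hm0
    have hnR : (1:ℝ) ≤ (n : ℝ) := by exact_mod_cast hn1'
    have hn0R : (0:ℝ) < (n:ℝ) := by linarith
    have hmxm : (m n : ℝ) ≤ (max (p n) (max (m n) (r n)) : ℝ) :=
      le_trans (le_max_left _ _) (le_max_right _ _)
    have hmxr : (r n : ℝ) ≤ (max (p n) (max (m n) (r n)) : ℝ) :=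
      le_trans (le_max_right _ _) (le_max_right _ _)
    have hmxp : (p n : ℝ) ≤ (max (p n) (max (m n) (r n)) : ℝ) := le_max_left _ _
    have hmx8 : (max (p n) (max (m n) (r n)) : ℝ) < (n:ℝ)/8 := by
      rw [div_lt_iff₀ hn0R] at hsmall
      linarith
    have hp8 : (p n : ℝ) ≤ (n:ℝ)/8 := by linarith
    have hm8 : (m n : ℝ) ≤ (n:ℝ)/8 := by linarith
    have hpm : (0:ℝ) < (n:ℝ) - p n - m n := by
      have h2 : ((p n + m n : ℕ) : ℝ) < ((n : ℕ) : ℝ) := by exact_mod_cast hpmn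
      push_cast at h2
      linarith
    have hval : muN p m r n = (n:ℝ) * (phiA ((n:ℝ) + r n - p n - m n) + phiA ((n:ℝ) - p n)
        - phiA ((n:ℝ) - p n - m n) - phiA ((n:ℝ) + r n - p n)) := by
      rw [muN]
      exact muN_eq_phi _ _ _ _ hpm (by linarith) (by linarith)
    exact core hrn hrpR hmR hp8 hm8 hnR hmxm hmxr hval
  have hs2 : (0:ℝ) < Real.sqrt 2 := Real.sqrt_pos.2 (by norm_num)
  constructor
  · intro hT
    have hnegT : Tendsto (fun n : ℕ =>
        -((muN p m r n + (m n : ℝ) * r n) / Real.sqrt (2 * (m n : ℝ) * r n)))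
        atTop (nhds 0) := by
      simpa only [neg_zero] using hT.neg
    have hscaled : Tendsto (fun n : ℕ => Real.sqrt 2 *
        -((muN p m r n + (m n : ℝ) * r n) / Real.sqrt (2 * (m n : ℝ) * r n)))
        atTop (nhds 0) := by
      simpa only [mul_zero] using hnegT.const_mul (Real.sqrt 2)
    apply tendsto_of_tendsto_of_tendsto_of_le_of_le' tendsto_const_nhds hscaled
    · filter_upwards [key] with n hk
      exact hk.1
    · filter_upwards [key] with n hk
      have h2 := hk.2.1
      rw [div_le_iff₀ hs2] at h2
      nlinarith [h2]
  · intro hS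
    have hup : Tendsto (fun n : ℕ =>
        9 * (Real.sqrt ((m n : ℝ) * r n) * ((p n : ℝ) + (m n : ℝ)/2 - (r n : ℝ)/2) / n)
          + 2 * ((max (p n) (max (m n) (r n)) : ℝ) / n)) atTop (nhds 0) := by
      have := (hS.const_mul (9:ℝ)).add (hmax.const_mul (2:ℝ))
      simpa only [mul_zero, add_zero] using this
    have hnegT : Tendsto (fun n : ℕ =>
        -((muN p m r n + (m n : ℝ) * r n) / Real.sqrt (2 * (m n : ℝ) * r n)))
        atTop (nhds 0) := by
      apply tendsto_of_tendsto_of_tendsto_of_le_of_le' tendsto_const_nhds hup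
      · filter_upwards [key] with n hk
        exact le_trans (div_nonneg hk.1 (Real.sqrt_nonneg 2)) hk.2.1
      · filter_upwards [key] with n hk
        exact hk.2.2
    simpa only [neg_neg, neg_zero] using hnegT.neg
end

section
/- Let (Ω, F, P) be a probability space, J a positive integer, and p⁽¹⁾, …, p⁽ᴶ⁾ : Ω → [0,1] random variables each of which is super-uniform, i.e. P(p⁽ʲ⁾ ≤ u) ≤ u for every u ∈ [0,1] and every j = 1, …, J. Then for every α ∈ (0,1) and every γ_min ∈ (0,1), P( there exists γ ∈ (γ_min, 1) with (1/J)·#{ j : p⁽ʲ⁾ ≤ α·γ } ≥ γ ) ≤ α·(1 − log γ_min). -/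
open MeasureTheory Filter
open scoped Classical

/-- telescoping bound: `∑_{l=a}^{b-1} 1/(l+1) ≤ log b - log a` for `1 ≤ a ≤ b`. -/
lemma aux_sum_inv_le_log {a b : ℕ} (ha : 1 ≤ a) (hab : a ≤ b) :
    ∑ l ∈ Finset.Ico a b, (1 : ℝ) / (l + 1) ≤ Real.log b - Real.log a := by
  have h1 : ∀ l ∈ Finset.Ico a b, (1 : ℝ) / (l + 1) ≤ Real.log (l + 1) - Real.log l := by
    intro l hl
    have hl1 : 1 ≤ l := ha.trans (Finset.mem_Ico.1 hl).1
    have hlpos : (0 : ℝ) < l := by exact_mod_cast hl1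
    have hl1pos : (0 : ℝ) < l + 1 := by linarith
    have hx : (0 : ℝ) < l / (l + 1) := div_pos hlpos hl1pos
    have := Real.log_le_sub_one_of_pos hx
    rw [Real.log_div (ne_of_gt hlpos) (ne_of_gt hl1pos)] at this
    have : Real.log l - Real.log (l + 1) ≤ l / (l + 1) - 1 := this
    have hdiv : (l : ℝ) / (l + 1) - 1 = -(1 / (l + 1)) := by field_simp; ring
    linarith [hdiv ▸ this]
  calc ∑ l ∈ Finset.Ico a b, (1 : ℝ) / (l + 1)
      ≤ ∑ l ∈ Finset.Ico a b, (Real.log (l + 1) - Real.log l) := Finset.sum_le_sum h1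
    _ = Real.log b - Real.log a := by
        have h2 : ∀ n : ℕ, ∑ l ∈ Finset.range n, (Real.log (l + 1) - Real.log l)
            = Real.log n - Real.log 0 := by
          intro n
          have h := Finset.sum_range_sub (fun i => Real.log i) n
          push_cast at h ⊢
          exact h
        rw [Finset.sum_Ico_eq_sub _ hab, h2, h2]
        simp

/-- Key inequality for multi-split p-value aggregation: if `p⁽¹⁾,…,p⁽ᴶ⁾` are
super-uniform `[0,1]`-valued random variables (no independence assumed), then for
`α, γ_min ∈ (0,1)`,
`P(∃ γ ∈ (γ_min,1), (1/J)·#{j : p⁽ʲ⁾ ≤ αγ} ≥ γ) ≤ α(1 − log γ_min)`. -/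
theorem multisplit_pvalue_control
    {Ω : Type*} [MeasurableSpace Ω] (P : Measure Ω) [IsProbabilityMeasure P]
    (J : ℕ) (hJ : 0 < J) (pv : Fin J → Ω → ℝ)
    (hmeas : ∀ j, Measurable (pv j))
    (hrange : ∀ j ω, pv j ω ∈ Set.Icc (0 : ℝ) 1)
    (hsuper : ∀ j, ∀ u ∈ Set.Icc (0 : ℝ) 1, (P {ω | pv j ω ≤ u}).toReal ≤ u)
    (α γmin : ℝ) (hα : α ∈ Set.Ioo (0 : ℝ) 1) (hγ : γmin ∈ Set.Ioo (0 : ℝ) 1) :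
    (P {ω | ∃ γ ∈ Set.Ioo γmin (1 : ℝ),
        γ ≤ ((Finset.univ.filter fun j => pv j ω ≤ α * γ).card : ℝ) / J}).toReal ≤
      α * (1 - Real.log γmin) := by
  obtain ⟨hα0, hα1⟩ := hα
  obtain ⟨hγ0, hγ1⟩ := hγ
  have hJR : (0 : ℝ) < J := by exact_mod_cast hJ
  set k0 : ℕ := ⌊γmin * J⌋₊ + 1 with hk0def
  have hk0pos : 1 ≤ k0 := Nat.le_add_left 1 _
  have hγJk0 : γmin * J < k0 := by
    exact_mod_cast Nat.lt_floor_add_one (γmin * J)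
  have hk0J : k0 ≤ J := by
    have : ⌊γmin * J⌋₊ < J := by
      rw [Nat.floor_lt (by positivity)]
      calc γmin * J < 1 * J := by nlinarith
        _ = J := one_mul _
    omega
  -- the dominating simple function
  set d : ℕ → ℝ := fun l => (J : ℝ) / l - (J : ℝ) / (l + 1) with hd
  set X : Ω → ℝ := fun ω => (J : ℝ)⁻¹ * ∑ j : Fin J,
      ((if pv j ω ≤ α then (1 : ℝ) else 0)
        + ∑ l ∈ Finset.Ico k0 J, d l * (if pv j ω ≤ α * l / J then 1 else 0)) with hX
  have hdnonneg : ∀ l : ℕ, 1 ≤ l → 0 ≤ d l := by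
    intro l hl
    have hlpos : (0 : ℝ) < l := by exact_mod_cast hl
    have : (J : ℝ) / (l + 1) ≤ (J : ℝ) / l :=
      div_le_div_of_nonneg_left (le_of_lt hJR) hlpos (by linarith)
    simpa [hd] using sub_nonneg.2 this
  have hbracket_nonneg : ∀ j (ω : Ω),
      0 ≤ (if pv j ω ≤ α then (1 : ℝ) else 0)
        + ∑ l ∈ Finset.Ico k0 J, d l * (if pv j ω ≤ α * l / J then 1 else 0) := by
    intro j ω
    have h1 : (0:ℝ) ≤ (if pv j ω ≤ α then (1 : ℝ) else 0) := by positivity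
    have h2 : (0:ℝ) ≤ ∑ l ∈ Finset.Ico k0 J, d l * (if pv j ω ≤ α * l / J then 1 else 0) := by
      apply Finset.sum_nonneg
      intro l hl
      have : 1 ≤ l := hk0pos.trans (Finset.mem_Ico.1 hl).1
      have := hdnonneg l this
      positivity
    linarith
  have hXnonneg : ∀ ω, 0 ≤ X ω := by
    intro ω
    apply mul_nonneg (by positivity)
    exact Finset.sum_nonneg fun j _ => hbracket_nonneg j ω
  -- Step A: pointwise domination of the event
  have hsub : {ω | ∃ γ ∈ Set.Ioo γmin (1 : ℝ),
        γ ≤ ((Finset.univ.filter fun j => pv j ω ≤ α * γ).card : ℝ) / J}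
      ⊆ {ω | 1 ≤ X ω} := by
    intro ω hω
    obtain ⟨γ, ⟨hγγ, hγlt1⟩, hcard⟩ := hω
    set s : Finset (Fin J) := Finset.univ.filter fun j => pv j ω ≤ α * γ with hs
    set k : ℕ := s.card with hk
    have hkJ : k ≤ J := by
      calc k ≤ Finset.univ.card := Finset.card_filter_le _ _
        _ = J := by simp
    have hγk : γ * J ≤ k := (le_div_iff₀ hJR).1 hcard
    have hγminK : γmin * J < k := by
      have : γmin * J < γ * J := by nlinarith
      linarith
    have hk0k : k0 ≤ k := by
      have : ⌊γmin * J⌋₊ < k := by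
        rw [Nat.floor_lt (by positivity)]; exact hγminK
      omega
    have hkpos : 1 ≤ k := hk0pos.trans hk0k
    have hkR : (0 : ℝ) < k := by exact_mod_cast hkpos
    -- each j in s contributes at least J/k
    have hterm : ∀ j ∈ s, (J : ℝ) / k ≤
        (if pv j ω ≤ α then (1 : ℝ) else 0)
          + ∑ l ∈ Finset.Ico k0 J, d l * (if pv j ω ≤ α * l / J then 1 else 0) := by
      intro j hjs
      have hpγ : pv j ω ≤ α * γ := by
        simpa [hs] using (Finset.mem_filter.1 hjs).2
      have hif1 : (if pv j ω ≤ α then (1 : ℝ) else 0) = 1 := by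
        rw [if_pos]
        calc pv j ω ≤ α * γ := hpγ
          _ ≤ α * 1 := by nlinarith
          _ = α := mul_one _
      have hsum2 : ∑ l ∈ Finset.Ico k J, d l ≤
          ∑ l ∈ Finset.Ico k0 J, d l * (if pv j ω ≤ α * l / J then 1 else 0) := by
        have hsubset : Finset.Ico k J ⊆ Finset.Ico k0 J :=
          Finset.Ico_subset_Ico hk0k le_rfl
        calc ∑ l ∈ Finset.Ico k J, d l
            = ∑ l ∈ Finset.Ico k J, d l * (if pv j ω ≤ α * l / J then 1 else 0) := by
              apply Finset.sum_congr rfl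
              intro l hl
              have hkl : k ≤ l := (Finset.mem_Ico.1 hl).1
              have hklR : (k : ℝ) ≤ l := by exact_mod_cast hkl
              have hple : pv j ω ≤ α * l / J := by
                calc pv j ω ≤ α * γ := hpγ
                  _ ≤ α * k / J := by
                      rw [mul_div_assoc, mul_le_mul_iff_right₀ hα0, le_div_iff₀ hJR]
                      linarith [hγk]
                  _ ≤ α * l / J := by
                      gcongr
              rw [if_pos hple, mul_one]
          _ ≤ _ := by
              apply Finset.sum_le_sum_of_subset_of_nonneg hsubset
              intro l hl _
              have : 1 ≤ l := hk0pos.trans (Finset.mem_Ico.1 hl).1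
              have := hdnonneg l this
              positivity
      have htel : ∑ l ∈ Finset.Ico k J, d l = (J : ℝ) / k - 1 := by
        have h2 : ∀ n : ℕ, ∑ l ∈ Finset.range n, ((J:ℝ)/l - (J:ℝ)/(l+1))
            = (J:ℝ)/(0:ℕ) - (J:ℝ)/n := by
          intro n
          have h := Finset.sum_range_sub' (fun i => (J:ℝ)/i) n
          push_cast at h ⊢
          exact h
        have hdef : (∑ l ∈ Finset.Ico k J, d l)
            = ∑ l ∈ Finset.Ico k J, ((J:ℝ)/l - (J:ℝ)/(l+1)) := rfl
        have hJne : (J:ℝ) ≠ 0 := ne_of_gt hJR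
        rw [hdef, Finset.sum_Ico_eq_sub _ hkJ, h2, h2, Nat.cast_zero, div_zero,
          div_self hJne]
        ring
      rw [hif1]
      calc (J : ℝ) / k = 1 + ((J : ℝ) / k - 1) := by ring
        _ = 1 + ∑ l ∈ Finset.Ico k J, d l := by rw [htel]
        _ ≤ 1 + ∑ l ∈ Finset.Ico k0 J, d l * (if pv j ω ≤ α * l / J then 1 else 0) := by
            linarith [hsum2]
    have hXge : (J : ℝ)⁻¹ * (k * ((J : ℝ) / k)) ≤ X ω := by
      rw [hX]
      apply mul_le_mul_of_nonneg_left ?_ (by positivity)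
      calc (k : ℝ) * ((J : ℝ) / k) = ∑ _j ∈ s, (J : ℝ) / k := by
            rw [Finset.sum_const, nsmul_eq_mul, hk]
        _ ≤ ∑ j ∈ s, ((if pv j ω ≤ α then (1 : ℝ) else 0)
            + ∑ l ∈ Finset.Ico k0 J, d l * (if pv j ω ≤ α * l / J then 1 else 0)) :=
            Finset.sum_le_sum hterm
        _ ≤ ∑ j : Fin J, ((if pv j ω ≤ α then (1 : ℝ) else 0)
            + ∑ l ∈ Finset.Ico k0 J, d l * (if pv j ω ≤ α * l / J then 1 else 0)) := by
            apply Finset.sum_le_sum_of_subset_of_nonneg (Finset.subset_univ s)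
            intro j _ _
            exact hbracket_nonneg j ω
    have : (1 : ℝ) ≤ X ω := by
      have hcalc : (J : ℝ)⁻¹ * (k * ((J : ℝ) / k)) = 1 := by
        field_simp
      linarith [hcalc ▸ hXge]
    exact this
  -- measurability and integrability
  have hset : ∀ (j : Fin J) (c : ℝ), MeasurableSet {ω | pv j ω ≤ c} := by
    intro j c
    exact measurableSet_le (hmeas j) measurable_const
  have hint_ind : ∀ (j : Fin J) (c : ℝ),
      Integrable (fun ω => if pv j ω ≤ c then (1:ℝ) else 0) P := by
    intro j c
    have : (fun ω => if pv j ω ≤ c then (1:ℝ) else 0)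
        = Set.indicator {ω | pv j ω ≤ c} (fun _ => (1:ℝ)) := by
      funext ω
      simp [Set.indicator_apply, Set.mem_setOf_eq]
    rw [this]
    exact (integrable_const (1:ℝ)).indicator (hset j c)
  have hint_ind' : ∀ (j : Fin J) (c : ℝ),
      ∫ ω, (if pv j ω ≤ c then (1:ℝ) else 0) ∂P = (P {ω | pv j ω ≤ c}).toReal := by
    intro j c
    have h1 : (fun ω => if pv j ω ≤ c then (1:ℝ) else 0)
        = Set.indicator {ω | pv j ω ≤ c} (fun _ => (1:ℝ)) := by
      funext ω
      simp [Set.indicator_apply, Set.mem_setOf_eq]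
    rw [h1, integral_indicator_const (1:ℝ) (hset j c)]
    simp
    rfl
  have hbracket_int : ∀ j : Fin J, Integrable (fun ω =>
      (if pv j ω ≤ α then (1 : ℝ) else 0)
        + ∑ l ∈ Finset.Ico k0 J, d l * (if pv j ω ≤ α * l / J then 1 else 0)) P := by
    intro j
    apply (hint_ind j α).add
    apply integrable_finset_sum
    intro l _
    exact (hint_ind j (α * l / J)).const_mul (d l)
  have hXint : Integrable X P := by
    rw [hX]
    exact (integrable_finset_sum _ fun j _ => hbracket_int j).const_mul _
  -- Step B+C: Markov
  have hmarkov : (P {ω | ∃ γ ∈ Set.Ioo γmin (1 : ℝ),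
        γ ≤ ((Finset.univ.filter fun j => pv j ω ≤ α * γ).card : ℝ) / J}).toReal
      ≤ ∫ ω, X ω ∂P := by
    have hmono : P {ω | ∃ γ ∈ Set.Ioo γmin (1 : ℝ),
          γ ≤ ((Finset.univ.filter fun j => pv j ω ≤ α * γ).card : ℝ) / J}
        ≤ P {ω | 1 ≤ X ω} := measure_mono hsub
    have h1 : (P {ω | 1 ≤ X ω}).toReal ≤ ∫ ω, X ω ∂P := by
      have := mul_meas_ge_le_integral_of_nonneg
        (ae_of_all P hXnonneg) hXint 1
      simpa [Measure.real] using this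
    refine le_trans ?_ h1
    apply ENNReal.toReal_mono (measure_ne_top P _) hmono
  -- Step D+E: compute and bound the integral
  have hIbound : ∫ ω, X ω ∂P ≤ α * (1 - Real.log γmin) := by
    have hcalcI : ∫ ω, X ω ∂P = (J : ℝ)⁻¹ * ∑ j : Fin J,
        ((P {ω | pv j ω ≤ α}).toReal
          + ∑ l ∈ Finset.Ico k0 J, d l * (P {ω | pv j ω ≤ α * l / J}).toReal) := by
      rw [hX]
      rw [integral_const_mul]
      congr 1
      rw [integral_finset_sum _ fun j _ => hbracket_int j]
      apply Finset.sum_congr rfl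
      intro j _
      rw [integral_add (hint_ind j α)
        (integrable_finset_sum _ fun (l : ℕ) _ => (hint_ind j (α * l / J)).const_mul (d l))]
      congr 1
      · exact hint_ind' j α
      · rw [integral_finset_sum _ fun (l : ℕ) _ => (hint_ind j (α * l / J)).const_mul (d l)]
        apply Finset.sum_congr rfl
        intro l _
        rw [integral_const_mul, hint_ind' j (α * l / J)]
    rw [hcalcI]
    have hper : ∀ j : Fin J,
        (P {ω | pv j ω ≤ α}).toReal
          + ∑ l ∈ Finset.Ico k0 J, d l * (P {ω | pv j ω ≤ α * l / J}).toReal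
        ≤ α * (1 - Real.log γmin) := by
      intro j
      have h1 : (P {ω | pv j ω ≤ α}).toReal ≤ α :=
        hsuper j α ⟨le_of_lt hα0, le_of_lt hα1⟩
      have h2 : ∑ l ∈ Finset.Ico k0 J, d l * (P {ω | pv j ω ≤ α * l / J}).toReal
          ≤ ∑ l ∈ Finset.Ico k0 J, α * (1 / (l + 1)) := by
        apply Finset.sum_le_sum
        intro l hl
        obtain ⟨hlk0, hlJ⟩ := Finset.mem_Ico.1 hl
        have hl1 : 1 ≤ l := hk0pos.trans hlk0
        have hlR : (0:ℝ) < l := by exact_mod_cast hl1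
        have hlJR : (l : ℝ) < J := by exact_mod_cast hlJ
        have hmem : α * l / J ∈ Set.Icc (0:ℝ) 1 := by
          constructor
          · positivity
          · rw [div_le_one hJR]
            nlinarith
        have hF : (P {ω | pv j ω ≤ α * l / J}).toReal ≤ α * l / J :=
          hsuper j _ hmem
        have hdl := hdnonneg l hl1
        calc d l * (P {ω | pv j ω ≤ α * l / J}).toReal
            ≤ d l * (α * l / J) := by
              apply mul_le_mul_of_nonneg_left hF hdl
          _ = α * (1 / (l + 1)) := by
              rw [hd]
              have hJne : (J:ℝ) ≠ 0 := ne_of_gt hJR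
              have hlne : (l:ℝ) ≠ 0 := ne_of_gt hlR
              have hl1ne : (l:ℝ) + 1 ≠ 0 := by positivity
              field_simp
              ring
      have h3 : ∑ l ∈ Finset.Ico k0 J, α * (1 / (l + 1))
          ≤ α * (Real.log J - Real.log k0) := by
        rw [← Finset.mul_sum]
        apply mul_le_mul_of_nonneg_left (aux_sum_inv_le_log hk0pos hk0J) (le_of_lt hα0)
      have h4 : Real.log J - Real.log k0 ≤ -Real.log γmin := by
        have hlog : Real.log (γmin * J) ≤ Real.log k0 := by
          apply Real.log_le_log (by positivity) (le_of_lt hγJk0)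
        rw [Real.log_mul (ne_of_gt hγ0) (ne_of_gt hJR)] at hlog
        linarith
      calc (P {ω | pv j ω ≤ α}).toReal
            + ∑ l ∈ Finset.Ico k0 J, d l * (P {ω | pv j ω ≤ α * l / J}).toReal
          ≤ α + α * (Real.log J - Real.log k0) := by linarith [h2.trans h3]
        _ ≤ α + α * (-Real.log γmin) := by nlinarith [h4]
        _ = α * (1 - Real.log γmin) := by ring
    calc (J : ℝ)⁻¹ * ∑ j : Fin J,
          ((P {ω | pv j ω ≤ α}).toReal
            + ∑ l ∈ Finset.Ico k0 J, d l * (P {ω | pv j ω ≤ α * l / J}).toReal)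
        ≤ (J : ℝ)⁻¹ * ∑ _j : Fin J, α * (1 - Real.log γmin) := by
          apply mul_le_mul_of_nonneg_left (Finset.sum_le_sum fun j _ => hper j)
            (by positivity)
      _ = α * (1 - Real.log γmin) := by
          rw [Finset.sum_const, Finset.card_univ, Fintype.card_fin, nsmul_eq_mul]
          field_simp
  exact hmarkov.trans hIbound
end

section
/- For every α ∈ (0,1) and every γ_min ∈ (0,1), the Lebesgue integral over u ∈ [0,1] of the function u ↦ sup_{γ ∈ (γ_min, 1)} [1{u ≤ α·γ}/γ] equals α·(1 − log γ_min). Equivalently, if U is a random variable uniformly distributed on [0,1], then E[ sup_{γ ∈ (γ_min,1)} 1{U ≤ α·γ}/γ ] = α·(1 − log γ_min). -/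
open MeasureTheory

lemma sup_indicator_div_eq (α γmin : ℝ) (hα : α ∈ Set.Ioo (0 : ℝ) 1)
    (hγ : γmin ∈ Set.Ioo (0 : ℝ) 1) (u : ℝ) :
    (⨆ γ : Set.Ioo γmin (1 : ℝ), if u ≤ α * (γ : ℝ) then 1 / (γ : ℝ) else 0) =
      if u ≤ α * γmin then 1 / γmin else if u < α then α / u else 0 := by
  obtain ⟨hα0, hα1⟩ := hα
  obtain ⟨hγ0, hγ1⟩ := hγ
  haveI : Nonempty (Set.Ioo γmin (1 : ℝ)) :=
    ⟨⟨(γmin + 1) / 2, by constructor <;> linarith⟩⟩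
  have hbdd : BddAbove (Set.range fun γ : Set.Ioo γmin (1 : ℝ) =>
      if u ≤ α * (γ : ℝ) then 1 / (γ : ℝ) else 0) := by
    refine ⟨1 / γmin, ?_⟩
    rintro x ⟨γ, rfl⟩
    dsimp only
    by_cases h : u ≤ α * (γ : ℝ)
    · rw [if_pos h]
      exact one_div_le_one_div_of_le hγ0 γ.2.1.le
    · rw [if_neg h]
      positivity
  by_cases h1 : u ≤ α * γmin
  · rw [if_pos h1]
    apply le_antisymm
    · refine ciSup_le fun γ => ?_
      by_cases h : u ≤ α * (γ : ℝ)
      · rw [if_pos h]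
        exact one_div_le_one_div_of_le hγ0 γ.2.1.le
      · rw [if_neg h]; positivity
    · refine le_of_forall_lt fun w hw => ?_
      rcases le_or_gt w 0 with hw0 | hw0
      · have hγ2 : ((γmin + 1) / 2) ∈ Set.Ioo γmin (1 : ℝ) :=
          ⟨by linarith, by linarith⟩
        calc w ≤ 0 := hw0
          _ < (if u ≤ α * ((γmin + 1) / 2) then 1 / ((γmin + 1) / 2) else 0) := by
              rw [if_pos (by nlinarith : u ≤ α * ((γmin + 1) / 2))]
              positivity
          _ ≤ _ := le_ciSup hbdd ⟨_, hγ2⟩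
      · have hwγ : w * γmin < 1 := (lt_div_iff₀ hγ0).mp (by simpa [one_div] using hw)
        set γ : ℝ := min ((γmin + 1 / w) / 2) ((γmin + 1) / 2) with hγdef
        have hinv : γmin < 1 / w := (lt_div_iff₀ hw0).mpr (by nlinarith)
        have hγm : γmin < γ := lt_min (by linarith) (by linarith)
        have hγlt1 : γ < 1 := lt_of_le_of_lt (min_le_right _ _) (by linarith)
        have hγw : γ < 1 / w := lt_of_le_of_lt (min_le_left _ _) (by linarith)
        have hγpos : 0 < γ := lt_trans hγ0 hγm
        have hwlt : w < 1 / γ := by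
          rw [lt_div_iff₀ hγpos]
          rw [lt_div_iff₀ hw0] at hγw
          nlinarith
        calc w < 1 / γ := hwlt
          _ = (if u ≤ α * γ then 1 / γ else 0) := by
              rw [if_pos (by nlinarith : u ≤ α * γ)]
          _ ≤ _ := le_ciSup hbdd ⟨γ, hγm, hγlt1⟩
  · rw [if_neg h1]
    have hu : α * γmin < u := not_le.mp h1
    have hu0 : 0 < u := lt_trans (by positivity) hu
    by_cases h2 : u < α
    · rw [if_pos h2]
      apply le_antisymm
      · refine ciSup_le fun γ => ?_
        by_cases h : u ≤ α * (γ : ℝ)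
        · rw [if_pos h]
          have hγpos : 0 < (γ : ℝ) := lt_trans hγ0 γ.2.1
          rw [div_le_div_iff₀ hγpos hu0]
          nlinarith
        · rw [if_neg h]; positivity
      · have hmem : u / α ∈ Set.Ioo γmin (1 : ℝ) :=
          ⟨(lt_div_iff₀ hα0).mpr (by nlinarith), (div_lt_one hα0).mpr h2⟩
        have hc : α * (u / α) = u := by field_simp
        calc α / u = (if u ≤ α * (u / α) then 1 / (u / α) else 0) := by
              rw [hc, if_pos le_rfl, one_div_div]
          _ ≤ _ := le_ciSup hbdd ⟨u / α, hmem⟩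
    · rw [if_neg h2]
      have hz : ∀ γ : Set.Ioo γmin (1 : ℝ),
          (if u ≤ α * (γ : ℝ) then 1 / (γ : ℝ) else 0) = 0 := fun γ => by
        refine if_neg (not_le.mpr ?_)
        have := γ.2.2
        nlinarith [not_lt.mp h2]
      exact (iSup_congr hz).trans ciSup_const

/-- The expectation of `sup_{γ ∈ (γ_min,1)} 1{U ≤ αγ}/γ` for `U` uniform on `[0,1]`:
the Lebesgue integral over `[0,1]` of `u ↦ sup_{γ ∈ (γ_min,1)} 1{u ≤ αγ}/γ` is
exactly `α(1 − log γ_min)`. -/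
theorem integral_sup_indicator_div
    (α γmin : ℝ) (hα : α ∈ Set.Ioo (0 : ℝ) 1) (hγ : γmin ∈ Set.Ioo (0 : ℝ) 1) :
    ∫ u in Set.Icc (0 : ℝ) 1,
        (⨆ γ : Set.Ioo γmin (1 : ℝ), if u ≤ α * (γ : ℝ) then 1 / (γ : ℝ) else 0) =
      α * (1 - Real.log γmin) := by
  obtain ⟨hα0, hα1⟩ := id hα
  obtain ⟨hγ0, hγ1⟩ := id hγ
  set g : ℝ → ℝ := fun u => if u ≤ α * γmin then 1 / γmin else if u < α then α / u else 0
    with hg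
  have hstep : (∫ u in Set.Icc (0 : ℝ) 1,
      (⨆ γ : Set.Ioo γmin (1 : ℝ), if u ≤ α * (γ : ℝ) then 1 / (γ : ℝ) else 0))
      = ∫ u in Set.Icc (0 : ℝ) 1, g u :=
    integral_congr_ae (ae_of_all _ (sup_indicator_div_eq α γmin hα hγ))
  rw [hstep, integral_Icc_eq_integral_Ioc,
    ← intervalIntegral.integral_of_le (by norm_num : (0:ℝ) ≤ 1)]
  set c : ℝ := α * γmin with hcdef
  have hc0 : 0 < c := by positivity
  have hcα : c < α := by nlinarith
  -- integrability on pieces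
  have hi1 : IntervalIntegrable g volume 0 c := by
    refine (intervalIntegrable_const (c := 1 / γmin)).congr_ae ?_
    rw [Set.uIoc_of_le hc0.le]
    filter_upwards [ae_restrict_mem measurableSet_Ioc] with u hu
    rw [hg]
    simp only [if_pos hu.2]
  have hne : ∀ᵐ u : ℝ, u ≠ α := by
    have : (volume : Measure ℝ) {α} = 0 := Real.volume_singleton
    rw [ae_iff]
    simpa using this
  have hi2 : IntervalIntegrable g volume c α := by
    have hcont : IntervalIntegrable (fun u => α * (1 / u)) volume c α := by
      apply ContinuousOn.intervalIntegrable
      apply ContinuousOn.mul continuousOn_const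
      apply ContinuousOn.div continuousOn_const continuousOn_id
      intro x hx
      rw [Set.uIcc_of_le hcα.le] at hx
      exact ne_of_gt (lt_of_lt_of_le hc0 hx.1)
    refine hcont.congr_ae ?_
    rw [Set.uIoc_of_le hcα.le]
    filter_upwards [ae_restrict_mem measurableSet_Ioc, ae_restrict_of_ae hne]
      with u hu hune
    have h1 : ¬ u ≤ α * γmin := not_le.mpr hu.1
    have h2 : u < α := lt_of_le_of_ne hu.2 hune
    rw [hg]
    simp only [hcdef, if_neg h1, if_pos h2]
    rw [mul_one_div]
  have hi3 : IntervalIntegrable g volume α 1 := by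
    refine (intervalIntegrable_const (c := (0:ℝ))).congr_ae ?_
    rw [Set.uIoc_of_le hα1.le]
    filter_upwards [ae_restrict_mem measurableSet_Ioc] with u hu
    have h1 : ¬ u ≤ α * γmin := not_le.mpr (lt_of_lt_of_le hcα hu.1.le)
    have h2 : ¬ u < α := not_lt.mpr hu.1.le
    rw [hg]
    simp only [hcdef, if_neg h1, if_neg h2]
  have hsplit : (∫ u in (0:ℝ)..1, g u)
      = ((∫ u in (0:ℝ)..c, g u) + ∫ u in c..α, g u) + ∫ u in α..(1:ℝ), g u := by
    rw [intervalIntegral.integral_add_adjacent_intervals hi1 hi2,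
      intervalIntegral.integral_add_adjacent_intervals (hi1.trans hi2) hi3]
  rw [hsplit]
  have I1 : (∫ u in (0:ℝ)..c, g u) = α := by
    rw [intervalIntegral.integral_congr (g := fun _ => 1 / γmin) ?_,
      intervalIntegral.integral_const]
    · rw [smul_eq_mul]
      field_simp
      rw [hcdef]; ring
    · intro u hu
      rw [Set.uIcc_of_le hc0.le] at hu
      rw [hg]
      simp only [if_pos hu.2]
  have I2 : (∫ u in c..α, g u) = α * (-Real.log γmin) := by
    have hcongr : (∫ u in c..α, g u) = ∫ u in c..α, α * (1 / u) := by
      refine intervalIntegral.integral_congr_ae ?_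
      filter_upwards [hne] with u hune hmem
      rw [Set.uIoc_of_le hcα.le] at hmem
      have h1 : ¬ u ≤ α * γmin := not_le.mpr hmem.1
      have h2 : u < α := lt_of_le_of_ne hmem.2 hune
      rw [hg]
      simp only [hcdef, if_neg h1, if_pos h2]
      rw [mul_one_div]
    rw [hcongr, intervalIntegral.integral_const_mul, integral_one_div]
    · congr 1
      rw [hcdef]
      rw [show α / (α * γmin) = (γmin)⁻¹ by field_simp, Real.log_inv]
    · rw [Set.uIcc_of_le hcα.le]
      intro h
      exact absurd h.1 (not_le.mpr hc0)
  have I3 : (∫ u in α..(1:ℝ), g u) = 0 := by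
    rw [intervalIntegral.integral_congr (g := fun _ => (0:ℝ)) ?_,
      intervalIntegral.integral_const, smul_zero]
    intro u hu
    rw [Set.uIcc_of_le hα1.le] at hu
    have h1 : ¬ u ≤ α * γmin := not_le.mpr (lt_of_lt_of_le hcα hu.1)
    have h2 : ¬ u < α := not_lt.mpr hu.1
    rw [hg]
    simp only [hcdef, if_neg h1, if_neg h2]
  rw [I1, I2, I3]
  ring
end

section
/- Fix constants t ≥ 0, c₂ > 0, c₆ > 0 and u ≥ 0. For each n, let Σ_y be an mₙ × mₙ real symmetric positive definite matrix with λ_min(Σ_y) ≥ c₂·n^{−t}, let Z̃ be an n × mₙ random matrix with independent standard normal entries, set Y = Z̃·Σ_y^{1/2}, and let Pₙ = Iₙ − (1/n)·𝟙𝟙ᵀ. Suppose there exist constants c₁ > 1, c₀ > 0 and N such that for all n > N, Prob( λ_max(n⁻¹Z̃ᵀPₙZ̃) > c₁ or λ_min(n⁻¹Z̃ᵀPₙZ̃) < 1/c₁ ) ≤ exp(−c₀·n/log n). Then there exist constants c₁' > 0, c₂' > 0, c₀' > 0 and N' such that for all n > N': (i) Prob( λ_min(YᵀPₙY) < c₁'·n^{1−t}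 ) ≤ exp(−c₀'·n/log n); and (ii) for any fixed unit vector a ∈ ℝ^{mₙ} with aᵀΣ_y a ≤ c₆·n^{2u}, Prob( aᵀYᵀPₙY a > c₂'·n^{2u+1} ) ≤ exp(−c₀'·n/log n). -/
open MeasureTheory ProbabilityTheory Filter Matrix

/-- The largest eigenvalue of a square real matrix, as the supremum of its set of
(real) eigenvalues. -/
noncomputable def lamMax {k : ℕ} (A : Matrix (Fin k) (Fin k) ℝ) : ℝ :=
  sSup {μ : ℝ | ∃ v : Fin k → ℝ, v ≠ 0 ∧ A.mulVec v = μ • v}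

/-- The smallest eigenvalue of a square real matrix. -/
noncomputable def lamMin {k : ℕ} (A : Matrix (Fin k) (Fin k) ℝ) : ℝ :=
  sInf {μ : ℝ | ∃ v : Fin k → ℝ, v ≠ 0 ∧ A.mulVec v = μ • v}

/-- The centering projection `Pₙ = Iₙ − (1/n)𝟙𝟙ᵀ`. -/
noncomputable def centerMat (n : ℕ) : Matrix (Fin n) (Fin n) ℝ :=
  1 - ((n : ℝ))⁻¹ • Matrix.of (fun _ _ => (1 : ℝ))

section helpers

lemma dot_mulVec_left {k n : ℕ} (M : Matrix (Fin n) (Fin k) ℝ) (a : Fin k → ℝ) (b : Fin n → ℝ) :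
    (Mᵀ *ᵥ b) ⬝ᵥ a = b ⬝ᵥ (M *ᵥ a) := by
  rw [dotProduct_mulVec, mulVec_transpose]

lemma dot_self_nonneg {k : ℕ} (x : Fin k → ℝ) : 0 ≤ x ⬝ᵥ x :=
  Finset.sum_nonneg fun i _ => mul_self_nonneg (x i)

lemma dot_self_pos {k : ℕ} {x : Fin k → ℝ} (hx : x ≠ 0) : 0 < x ⬝ᵥ x := by
  obtain ⟨i, hi⟩ := Function.ne_iff.mp hx
  have h1 : 0 < x i * x i := mul_self_pos.mpr hi
  have h2 : x i * x i ≤ x ⬝ᵥ x :=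
    Finset.single_le_sum (fun j _ => mul_self_nonneg (x j)) (Finset.mem_univ i)
  linarith

variable {k : ℕ} {A : Matrix (Fin k) (Fin k) ℝ}

lemma diag_eq (hA : A.IsHermitian) : (hA.eigenvectorUnitary : Matrix (Fin k) (Fin k) ℝ)ᵀ * A *
    (hA.eigenvectorUnitary : Matrix (Fin k) (Fin k) ℝ) = diagonal hA.eigenvalues := by
  have := hA.conjStarAlgAut_star_eigenvectorUnitary
  simp only [Unitary.conjStarAlgAut_apply, Unitary.coe_star, star_star] at this
  rw [Matrix.star_eq_conjTranspose, Matrix.conjTranspose_eq_transpose_of_trivial] at this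
  simpa using this

lemma eigset_eq (hA : A.IsHermitian) : {μ : ℝ | ∃ v : Fin k → ℝ, v ≠ 0 ∧ A.mulVec v = μ • v}
    = Set.range hA.eigenvalues := by
  ext μ
  constructor
  · rintro ⟨v, hv, hAv⟩
    set U : Matrix (Fin k) (Fin k) ℝ := (hA.eigenvectorUnitary : Matrix (Fin k) (Fin k) ℝ) with hU
    have hUT : star U = Uᵀ := by
      rw [Matrix.star_eq_conjTranspose, Matrix.conjTranspose_eq_transpose_of_trivial]
    have hU2 : U * Uᵀ = 1 := by rw [← hUT]; exact hA.eigenvectorUnitary.2.2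
    set w := Uᵀ *ᵥ v with hw
    have hw0 : w ≠ 0 := by
      intro h
      apply hv
      have h2 : U *ᵥ w = v := by
        rw [hw, mulVec_mulVec, hU2, one_mulVec]
      rw [h, mulVec_zero] at h2
      exact h2.symm
    have hdiag : diagonal hA.eigenvalues *ᵥ w = μ • w := by
      have step : (Uᵀ * A) *ᵥ v = μ • (Uᵀ *ᵥ v) := by
        rw [← mulVec_mulVec, hAv, mulVec_smul]
      calc diagonal hA.eigenvalues *ᵥ w = (Uᵀ * A * U) *ᵥ (Uᵀ *ᵥ v) := by
            rw [diag_eq hA, hw]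
        _ = ((Uᵀ * A) * (U * Uᵀ)) *ᵥ v := by rw [mulVec_mulVec, mul_assoc, mul_assoc]
        _ = (Uᵀ * A) *ᵥ v := by rw [hU2, mul_one]
        _ = μ • w := step
    obtain ⟨i, hi⟩ := Function.ne_iff.mp hw0
    refine ⟨i, ?_⟩
    have h2 := congrFun hdiag i
    simp only [mulVec_diagonal, Pi.smul_apply, smul_eq_mul] at h2
    exact mul_right_cancel₀ hi h2
  · rintro ⟨i, rfl⟩
    refine ⟨hA.eigenvectorBasis i, ?_, hA.mulVec_eigenvectorBasis i⟩
    intro h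
    have h1 : hA.eigenvectorBasis i = 0 := by
      ext j
      exact congrFun h j
    have := hA.eigenvectorBasis.orthonormal.1 i
    rw [h1] at this
    simp at this

lemma quadform_eq (hA : A.IsHermitian) (x : Fin k → ℝ) :
    ∃ w : Fin k → ℝ, x ⬝ᵥ x = ∑ i, (w i)^2 ∧
      x ⬝ᵥ A.mulVec x = ∑ i, hA.eigenvalues i * (w i)^2 := by
  set U : Matrix (Fin k) (Fin k) ℝ := (hA.eigenvectorUnitary : Matrix (Fin k) (Fin k) ℝ) with hU
  have hUT : star U = Uᵀ := by
    rw [Matrix.star_eq_conjTranspose, Matrix.conjTranspose_eq_transpose_of_trivial]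
  have hU2 : U * Uᵀ = 1 := by rw [← hUT]; exact hA.eigenvectorUnitary.2.2
  set w := Uᵀ *ᵥ x with hw
  refine ⟨w, ?_, ?_⟩
  · have h1 : w ⬝ᵥ w = x ⬝ᵥ ((U * Uᵀ) *ᵥ x) := by
      rw [hw, dot_mulVec_left, mulVec_mulVec]
    rw [hU2, one_mulVec] at h1
    rw [← h1]
    simp [dotProduct, sq]
  · have hspec : A = U * diagonal hA.eigenvalues * Uᵀ := by
      have h3 := diag_eq hA
      calc A = (U * Uᵀ) * A * (U * Uᵀ) := by rw [hU2, one_mul, mul_one]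
        _ = U * (Uᵀ * A * U) * Uᵀ := by simp only [mul_assoc]
        _ = U * diagonal hA.eigenvalues * Uᵀ := by rw [h3]
    calc x ⬝ᵥ A *ᵥ x = x ⬝ᵥ (U *ᵥ (diagonal hA.eigenvalues *ᵥ w)) := by
          rw [hw, mulVec_mulVec, mulVec_mulVec, ← hspec]
      _ = w ⬝ᵥ (diagonal hA.eigenvalues *ᵥ w) := by
          rw [hw, dot_mulVec_left]
      _ = ∑ i, hA.eigenvalues i * (w i)^2 := by
          simp only [dotProduct, mulVec_diagonal, sq]
          exact Finset.sum_congr rfl fun i _ => by ring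

lemma lamMin_le_eig (hA : A.IsHermitian) (i : Fin k) : lamMin A ≤ hA.eigenvalues i := by
  rw [lamMin, eigset_eq hA]
  exact csInf_le (Set.Finite.bddBelow (Set.finite_range _)) ⟨i, rfl⟩

lemma eig_le_lamMax (hA : A.IsHermitian) (i : Fin k) : hA.eigenvalues i ≤ lamMax A := by
  rw [lamMax, eigset_eq hA]
  exact le_csSup (Set.Finite.bddAbove (Set.finite_range _)) ⟨i, rfl⟩

lemma rayleigh_min (hA : A.IsHermitian) (x : Fin k → ℝ) :
    lamMin A * (x ⬝ᵥ x) ≤ x ⬝ᵥ A.mulVec x := by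
  obtain ⟨w, h1, h2⟩ := quadform_eq hA x
  rw [h1, h2, Finset.mul_sum]
  exact Finset.sum_le_sum fun i _ =>
    mul_le_mul_of_nonneg_right (lamMin_le_eig hA i) (sq_nonneg _)

lemma rayleigh_max (hA : A.IsHermitian) (x : Fin k → ℝ) :
    x ⬝ᵥ A.mulVec x ≤ lamMax A * (x ⬝ᵥ x) := by
  obtain ⟨w, h1, h2⟩ := quadform_eq hA x
  rw [h1, h2, Finset.mul_sum]
  exact Finset.sum_le_sum fun i _ =>
    mul_le_mul_of_nonneg_right (eig_le_lamMax hA i) (sq_nonneg _)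

lemma lamMin_ge (hA : A.IsHermitian) [Nonempty (Fin k)] {c : ℝ}
    (h : ∀ (μ : ℝ) (v : Fin k → ℝ), v ≠ 0 → A.mulVec v = μ • v → c ≤ μ) :
    c ≤ lamMin A := by
  rw [lamMin]
  refine le_csInf ?_ ?_
  · rw [eigset_eq hA]
    exact Set.range_nonempty _
  · rintro μ ⟨v, hv, hAv⟩
    exact h μ v hv hAv

lemma centerMat_herm (n : ℕ) : (centerMat n).IsHermitian := by
  rw [Matrix.IsHermitian, Matrix.conjTranspose_eq_transpose_of_trivial]
  unfold centerMat
  rw [transpose_sub, transpose_one, transpose_smul]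
  have h : (Matrix.of fun (_ _ : Fin n) => (1:ℝ))ᵀ = Matrix.of fun _ _ => (1:ℝ) := by
    ext i j; rfl
  rw [h]

/-- The key deterministic estimate. -/
lemma key_det {k n : ℕ} (hn : 0 < n) [Nonempty (Fin k)]
    (Z : Matrix (Fin n) (Fin k) ℝ) (S Sy : Matrix (Fin k) (Fin k) ℝ)
    (hS : S.IsHermitian) (hsq : S * S = Sy)
    {c₁ : ℝ} (hc₁ : 0 < c₁)
    (hmax : lamMax (((n : ℝ))⁻¹ • (Zᵀ * centerMat n * Z)) ≤ c₁)
    (hmin : 1 / c₁ ≤ lamMin (((n : ℝ))⁻¹ • (Zᵀ * centerMat n * Z)))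
    {σ : ℝ} (hσ0 : 0 ≤ σ) (hσ : σ ≤ lamMin Sy) :
    (1 / c₁ * σ * n ≤ lamMin ((Z * S)ᵀ * centerMat n * (Z * S)))
    ∧ ∀ a : Fin k → ℝ,
        a ⬝ᵥ ((Z * S)ᵀ * centerMat n * (Z * S)).mulVec a ≤ c₁ * (a ⬝ᵥ Sy.mulVec a) * n := by
  have hn0 : ((n : ℝ)) ≠ 0 := Nat.cast_ne_zero.mpr hn.ne'
  have hnpos : (0 : ℝ) < n := Nat.cast_pos.mpr hn
  set G := Zᵀ * centerMat n * Z with hGdef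
  set A := ((n : ℝ))⁻¹ • G with hAdef
  have hST : Sᵀ = S := by
    have := hS.eq
    rwa [Matrix.conjTranspose_eq_transpose_of_trivial] at this
  have hG : G.IsHermitian := by
    have h := isHermitian_conjTranspose_mul_mul Z (centerMat_herm n)
    rwa [Matrix.conjTranspose_eq_transpose_of_trivial] at h
  have hA : A.IsHermitian := by
    rw [Matrix.IsHermitian, hAdef, conjTranspose_smul, hG.eq, star_trivial]
  have hGA : G = (n : ℝ) • A := by
    rw [hAdef, smul_smul, mul_inv_cancel₀ hn0, one_smul]
  set B := (Z * S)ᵀ * centerMat n * (Z * S) with hBdef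
  have hBeq : B = S * G * S := by
    rw [hBdef, hGdef, transpose_mul, hST]
    simp only [Matrix.mul_assoc]
  have hB : B.IsHermitian := by
    have h := isHermitian_conjTranspose_mul_mul (Z * S) (centerMat_herm n)
    rwa [Matrix.conjTranspose_eq_transpose_of_trivial] at h
  have hSyH : Sy.IsHermitian := by
    rw [Matrix.IsHermitian, Matrix.conjTranspose_eq_transpose_of_trivial, ← hsq,
      transpose_mul, hST]
  -- quadratic form identity
  have hquad : ∀ v : Fin k → ℝ, v ⬝ᵥ B.mulVec v = (n : ℝ) * ((S *ᵥ v) ⬝ᵥ A.mulVec (S *ᵥ v)) := by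
    intro v
    have h1 : B.mulVec v = S *ᵥ (G *ᵥ (S *ᵥ v)) := by
      rw [hBeq, mulVec_mulVec, mulVec_mulVec]
    calc v ⬝ᵥ B.mulVec v = (Sᵀ *ᵥ v) ⬝ᵥ (G *ᵥ (S *ᵥ v)) := by rw [h1, dot_mulVec_left]
      _ = (S *ᵥ v) ⬝ᵥ (G *ᵥ (S *ᵥ v)) := by rw [hST]
      _ = (n : ℝ) * ((S *ᵥ v) ⬝ᵥ A.mulVec (S *ᵥ v)) := by
          rw [hGA, smul_mulVec, dotProduct_smul, smul_eq_mul]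
  have hSv : ∀ v : Fin k → ℝ, (S *ᵥ v) ⬝ᵥ (S *ᵥ v) = v ⬝ᵥ Sy.mulVec v := by
    intro v
    calc (S *ᵥ v) ⬝ᵥ (S *ᵥ v) = (Sᵀ *ᵥ v) ⬝ᵥ (S *ᵥ v) := by rw [hST]
      _ = v ⬝ᵥ (S *ᵥ (S *ᵥ v)) := dot_mulVec_left _ _ _
      _ = v ⬝ᵥ Sy.mulVec v := by rw [mulVec_mulVec, hsq]
  constructor
  · refine lamMin_ge hB ?_
    intro μ v hv hBv
    have hd : 0 < v ⬝ᵥ v := dot_self_pos hv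
    have key : μ * (v ⬝ᵥ v) = (n : ℝ) * ((S *ᵥ v) ⬝ᵥ A.mulVec (S *ᵥ v)) := by
      rw [← hquad v, hBv, dotProduct_smul, smul_eq_mul]
    have hyy : (S *ᵥ v) ⬝ᵥ (S *ᵥ v) = v ⬝ᵥ Sy.mulVec v := hSv v
    have hyynn : (0:ℝ) ≤ (S *ᵥ v) ⬝ᵥ (S *ᵥ v) := dot_self_nonneg _
    have h2 : lamMin A * ((S *ᵥ v) ⬝ᵥ (S *ᵥ v)) ≤ (S *ᵥ v) ⬝ᵥ A.mulVec (S *ᵥ v) :=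
      rayleigh_min hA _
    have h3 : 1 / c₁ * ((S *ᵥ v) ⬝ᵥ (S *ᵥ v)) ≤ lamMin A * ((S *ᵥ v) ⬝ᵥ (S *ᵥ v)) :=
      mul_le_mul_of_nonneg_right hmin hyynn
    have h5 : lamMin Sy * (v ⬝ᵥ v) ≤ v ⬝ᵥ Sy.mulVec v := rayleigh_min hSyH v
    have h6 : σ * (v ⬝ᵥ v) ≤ lamMin Sy * (v ⬝ᵥ v) := mul_le_mul_of_nonneg_right hσ hd.le
    -- combine
    have hc₁' : (0:ℝ) < 1 / c₁ := by positivity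
    have step1 : σ * (v ⬝ᵥ v) ≤ (S *ᵥ v) ⬝ᵥ (S *ᵥ v) := by
      rw [hyy]; linarith
    have step2 : 1 / c₁ * (σ * (v ⬝ᵥ v)) ≤ (S *ᵥ v) ⬝ᵥ A.mulVec (S *ᵥ v) := by
      have := mul_le_mul_of_nonneg_left step1 hc₁'.le
      linarith
    have step3 : (n : ℝ) * (1 / c₁ * (σ * (v ⬝ᵥ v))) ≤ μ * (v ⬝ᵥ v) := by
      rw [key]
      exact mul_le_mul_of_nonneg_left step2 hnpos.le
    have final : (1 / c₁ * σ * n) * (v ⬝ᵥ v) ≤ μ * (v ⬝ᵥ v) := by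
      calc (1 / c₁ * σ * n) * (v ⬝ᵥ v) = (n : ℝ) * (1 / c₁ * (σ * (v ⬝ᵥ v))) := by ring
        _ ≤ μ * (v ⬝ᵥ v) := step3
    exact le_of_mul_le_mul_right final hd
  · intro a
    rw [hquad a]
    have hyynn : (0:ℝ) ≤ (S *ᵥ a) ⬝ᵥ (S *ᵥ a) := dot_self_nonneg _
    have h2 : (S *ᵥ a) ⬝ᵥ A.mulVec (S *ᵥ a) ≤ lamMax A * ((S *ᵥ a) ⬝ᵥ (S *ᵥ a)) :=
      rayleigh_max hA _
    have h3 : lamMax A * ((S *ᵥ a) ⬝ᵥ (S *ᵥ a)) ≤ c₁ * ((S *ᵥ a) ⬝ᵥ (S *ᵥ a)) :=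
      mul_le_mul_of_nonneg_right hmax hyynn
    have h4 : (S *ᵥ a) ⬝ᵥ (S *ᵥ a) = a ⬝ᵥ Sy.mulVec a := hSv a
    calc (n : ℝ) * ((S *ᵥ a) ⬝ᵥ A.mulVec (S *ᵥ a))
        ≤ (n : ℝ) * (c₁ * ((S *ᵥ a) ⬝ᵥ (S *ᵥ a))) := by
          apply mul_le_mul_of_nonneg_left _ hnpos.le
          linarith
      _ = c₁ * (a ⬝ᵥ Sy.mulVec a) * n := by rw [h4]; ring

end helpers

/-- Lemma 9 (eigenvalue bounds for `YᵀPₙY` with `Y = Z̃ Σ_y^{1/2}`): if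
`λ_min(Σ_y) ≥ c₂ n^{−t}` and the centered standardized Gram matrices concentrate,
then (i) `λ_min(YᵀPₙY) ≥ c₁' n^{1−t}` with overwhelming probability, and (ii) for any
unit vector `a` with `aᵀΣ_y a ≤ c₆ n^{2u}`, `aᵀYᵀPₙY a ≤ c₂' n^{2u+1}` with
overwhelming probability. -/
theorem Y_gram_eigenvalue_bounds
    (t c₂ c₆ u : ℝ) (ht : 0 ≤ t) (hc₂ : 0 < c₂) (hc₆ : 0 < c₆) (hu : 0 ≤ u)
    (m : ℕ → ℕ)
    (Sy Ssq : (n : ℕ) → Matrix (Fin (m n)) (Fin (m n)) ℝ)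
    (hSy : ∀ n, (Sy n).PosDef)
    (hSsq : ∀ n, (Ssq n).PosDef ∧ Ssq n * Ssq n = Sy n)
    (hSymin : ∀ n : ℕ, 1 ≤ n → c₂ * (n : ℝ) ^ (-t) ≤ lamMin (Sy n))
    {Ω : Type*} [MeasurableSpace Ω] (P : Measure Ω) [IsProbabilityMeasure P]
    (Zt : (n : ℕ) → Ω → Matrix (Fin n) (Fin (m n)) ℝ)
    (hZmeas : ∀ n i j, Measurable (fun ω => Zt n ω i j))
    (hZindep : ∀ n, iIndepFun
      (fun ij : Fin n × Fin (m n) => fun ω => Zt n ω ij.1 ij.2) P)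
    (hZlaw : ∀ n i j, Measure.map (fun ω => Zt n ω i j) P = gaussianReal 0 1)
    (c₁ c₀ : ℝ) (N : ℕ) (hc₁ : 1 < c₁) (hc₀ : 0 < c₀)
    (hconc : ∀ n : ℕ, N < n →
      P {ω | c₁ < lamMax (((n : ℝ))⁻¹ • ((Zt n ω)ᵀ * centerMat n * Zt n ω)) ∨
             lamMin (((n : ℝ))⁻¹ • ((Zt n ω)ᵀ * centerMat n * Zt n ω)) < 1 / c₁} ≤
        ENNReal.ofReal (Real.exp (-(c₀ * n) / Real.log n))) :
    ∃ c₁' c₂' c₀' : ℝ, 0 < c₁' ∧ 0 < c₂' ∧ 0 < c₀' ∧ ∃ N' : ℕ, ∀ n : ℕ, N' < n →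
      (P {ω | lamMin ((Zt n ω * Ssq n)ᵀ * centerMat n * (Zt n ω * Ssq n)) <
            c₁' * (n : ℝ) ^ ((1 : ℝ) - t)} ≤
        ENNReal.ofReal (Real.exp (-(c₀' * n) / Real.log n)))
      ∧ ∀ a : Fin (m n) → ℝ, a ⬝ᵥ a = 1 → a ⬝ᵥ (Sy n).mulVec a ≤ c₆ * (n : ℝ) ^ (2 * u) →
          P {ω | c₂' * (n : ℝ) ^ (2 * u + 1) <
              a ⬝ᵥ ((Zt n ω * Ssq n)ᵀ * centerMat n * (Zt n ω * Ssq n)).mulVec a} ≤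
            ENNReal.ofReal (Real.exp (-(c₀' * n) / Real.log n)) := by
  have hc₁pos : (0:ℝ) < c₁ := lt_trans one_pos hc₁
  refine ⟨c₂ / c₁, c₁ * c₆, c₀, by positivity, by positivity, hc₀, max N 1, ?_⟩
  intro n hn
  have hN : N < n := lt_of_le_of_lt (le_max_left _ _) hn
  have hn1 : 1 ≤ n := le_of_lt (lt_of_le_of_lt (le_max_right _ _) hn)
  have hnpos : 0 < n := hn1
  have hnR : (0:ℝ) < (n:ℝ) := Nat.cast_pos.mpr hnpos
  have hσ0 : (0:ℝ) ≤ c₂ * (n:ℝ) ^ (-t) :=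
    le_of_lt (mul_pos hc₂ (Real.rpow_pos_of_pos hnR _))
  have hσ : c₂ * (n:ℝ) ^ (-t) ≤ lamMin (Sy n) := hSymin n hn1
  have hk : Nonempty (Fin (m n)) := by
    rcases Nat.eq_zero_or_pos (m n) with h0 | hpos
    · exfalso
      have hemp : {μ : ℝ | ∃ v : Fin (m n) → ℝ, v ≠ 0 ∧ (Sy n).mulVec v = μ • v} = ∅ := by
        ext μ
        simp only [Set.mem_setOf_eq, Set.mem_empty_iff_false, iff_false, not_exists]
        rintro v ⟨hv, -⟩
        apply hv
        ext i
        have hi := i.2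
        omega
      rw [lamMin, hemp, Real.sInf_empty] at hσ
      have : (0:ℝ) < c₂ * (n:ℝ) ^ (-t) := mul_pos hc₂ (Real.rpow_pos_of_pos hnR _)
      linarith
    · exact ⟨⟨0, hpos⟩⟩
  have hSherm : (Ssq n).IsHermitian := (hSsq n).1.1
  have hsq : Ssq n * Ssq n = Sy n := (hSsq n).2
  set bad := {ω | c₁ < lamMax (((n : ℝ))⁻¹ • ((Zt n ω)ᵀ * centerMat n * Zt n ω)) ∨
      lamMin (((n : ℝ))⁻¹ • ((Zt n ω)ᵀ * centerMat n * Zt n ω)) < 1 / c₁} with hbad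
  have hgood : ∀ ω, ω ∉ bad →
      (1 / c₁ * (c₂ * (n:ℝ) ^ (-t)) * n ≤
        lamMin ((Zt n ω * Ssq n)ᵀ * centerMat n * (Zt n ω * Ssq n)))
      ∧ ∀ a : Fin (m n) → ℝ,
          a ⬝ᵥ ((Zt n ω * Ssq n)ᵀ * centerMat n * (Zt n ω * Ssq n)).mulVec a ≤
            c₁ * (a ⬝ᵥ (Sy n).mulVec a) * n := by
    intro ω hω
    rw [hbad, Set.mem_setOf_eq, not_or, not_lt, not_lt] at hω
    exact key_det hnpos (Zt n ω) (Ssq n) (Sy n) hSherm hsq hc₁pos hω.1 hω.2 hσ0 hσ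
  have hpow1 : (n:ℝ) ^ ((1:ℝ) - t) = (n:ℝ) ^ (-t) * n := by
    rw [show (1:ℝ) - t = -t + 1 by ring, Real.rpow_add hnR, Real.rpow_one]
  have hpow2 : (n:ℝ) ^ (2 * u + 1) = (n:ℝ) ^ (2 * u) * n := by
    rw [Real.rpow_add hnR, Real.rpow_one]
  constructor
  · refine le_trans (measure_mono ?_) (hconc n hN)
    intro ω hω
    by_contra hb
    have h1 := (hgood ω hb).1
    rw [Set.mem_setOf_eq] at hω
    have heq : c₂ / c₁ * (n:ℝ) ^ ((1:ℝ) - t) = 1 / c₁ * (c₂ * (n:ℝ) ^ (-t)) * n := by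
      rw [hpow1]; ring
    rw [heq] at hω
    linarith
  · intro a ha1 ha2
    refine le_trans (measure_mono ?_) (hconc n hN)
    intro ω hω
    by_contra hb
    have h1 := (hgood ω hb).2 a
    rw [Set.mem_setOf_eq] at hω
    have h2 : c₁ * (a ⬝ᵥ (Sy n).mulVec a) * n ≤ c₁ * (c₆ * (n:ℝ) ^ (2 * u)) * n :=
      mul_le_mul_of_nonneg_right (mul_le_mul_of_nonneg_left ha2 hc₁pos.le) hnR.le
    have heq : c₁ * c₆ * (n:ℝ) ^ (2 * u + 1) = c₁ * (c₆ * (n:ℝ) ^ (2 * u)) * n := by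
      rw [hpow2]; ring
    rw [heq] at hω
    linarith
end
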